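/- arXiv:2103.12153 — 2 statements merged into one kernel-verified Lean document; each statement's English description precedes it below -/
import Mathlib

section
/- Let n and ℓ be positive integers with n ≥ 2ℓ+1 ≥ 3. If G is an n-vertex spider, then G contains at most ℓ+3 paths having exactly n−ℓ vertices, with the single exception ℓ = 2 and G isomorphic to the spider S_{1,1,1,1} (the star K_{1,4}). -/
open SimpleGraph

/-- The eccentricity (`ℕ∞`-valued) of a vertex: supremum of extended distances to
all vertices.  It is infinite if the graph is disconnected. -/
noncomputable def eccent {V : Type*} (G : SimpleGraph V) (v : V) : ℕ∞ :=
  ⨆ w, G.edist v w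

/-- The radius (`ℕ∞`-valued) of a graph: minimum eccentricity. -/
noncomputable def gradius {V : Type*} (G : SimpleGraph V) : ℕ∞ :=
  ⨅ v, _root_.eccent G v

/-- The diameter (`ℕ∞`-valued) of a graph: maximum distance between two vertices. -/
noncomputable def gdiam {V : Type*} (G : SimpleGraph V) : ℕ∞ :=
  ⨆ v, ⨆ w, G.edist v w

/-- Two graphs on `Fin n` have the same `k`-deck: there is a bijection `φ` between the
`k`-element vertex subsets such that for each subset `s` the subgraph induced by `s` in the
first graph is isomorphic to the subgraph induced by `φ s` in the second. -/
def SameDeck {n : ℕ} (G H : SimpleGraph (Fin n)) (k : ℕ) : Prop :=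
  ∃ φ : {s : Finset (Fin n) // s.card = k} ≃ {s : Finset (Fin n) // s.card = k},
    ∀ s : {s : Finset (Fin n) // s.card = k},
      Nonempty ((SimpleGraph.induce (↑s.1 : Set (Fin n)) G) ≃g
                (SimpleGraph.induce (↑(φ s).1 : Set (Fin n)) H))

/-- The degree of a vertex. -/
noncomputable def ndeg {V : Type*} (G : SimpleGraph V) (v : V) : ℕ :=
  Nat.card {w : V // G.Adj v w}

namespace SpiderAux
open Finset

/-- number of path-pairs within a leg of length `a` (incl. center) at distance `D` -/
def Wt (D a : ℕ) : ℕ := a + 1 - D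

/-- number of cross pairs between legs of lengths `a`, `b` at distance `D` -/
def Nt (D a b : ℕ) : ℕ := min a (D-1) + min b (D-1) + 1 - D

def pairSum (D : ℕ) : List ℕ → ℕ
  | [] => 0
  | a :: t => (t.map (Nt D a)).sum + pairSum D t

def legCount (D : ℕ) (l : List ℕ) : ℕ := (l.map (Wt D)).sum + pairSum D l

lemma Nt_le_right (D a b : ℕ) (hD : 1 ≤ D) : Nt D a b ≤ b := by
  have h1 : min a (D-1) ≤ D-1 := min_le_right _ _
  have h2 : min b (D-1) ≤ b := min_le_left _ _
  unfold Nt; omega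

lemma Nt_le (D a b : ℕ) : Nt D a b ≤ a + b + 1 - D := by
  have h1 : min a (D-1) ≤ a := min_le_left _ _
  have h2 : min b (D-1) ≤ b := min_le_left _ _
  unfold Nt; omega

lemma Nt_comm (D a b : ℕ) : Nt D a b = Nt D b a := by unfold Nt; omega

lemma Nt_eq (D a b : ℕ) (ha : a + 1 ≤ D) (hb : b + 1 ≤ D) :
    Nt D a b = a + b + 1 - D := by
  have h1 : min a (D-1) = a := min_eq_left (by omega)
  have h2 : min b (D-1) = b := min_eq_left (by omega)
  unfold Nt; omega

lemma sorted_head_ge {a : ℕ} {t : List ℕ} (h : (a :: t).Pairwise (· ≥ ·)) :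
    ∀ x ∈ t, x ≤ a := by
  rw [List.pairwise_cons] at h
  exact fun x hx => h.1 x hx

lemma pairSum_eq_zero (D : ℕ) : ∀ (l : List ℕ), l.Pairwise (· ≥ ·) →
    (∀ x ∈ l, ∀ y ∈ l.tail, x + y + 1 ≤ D) → pairSum D l = 0 := by
  intro l
  induction l with
  | nil => intro _ _; rfl
  | cons a t ih =>
    intro hs hd
    rw [List.pairwise_cons] at hs
    have h1 : (t.map (Nt D a)).sum = 0 := by
      apply List.sum_eq_zero
      intro x hx
      simp only [List.mem_map] at hx
      obtain ⟨y, hy, rfl⟩ := hx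
      have := hd a (by simp) y hy
      have := Nt_le D a y
      omega
    have h2 : pairSum D t = 0 := by
      apply ih hs.2
      intro x hx y hy
      exact hd x (by simp [hx]) y (List.mem_of_mem_tail hy)
    simp [pairSum, h1, h2]

lemma pairSum_le_one (D : ℕ) (l : List ℕ) (hs : l.Pairwise (· ≥ ·))
    (hsum : l.sum ≤ D) (hpos : ∀ x ∈ l, 1 ≤ x) : pairSum D l ≤ 1 := by
  match l, hs, hsum, hpos with
  | [], _, _, _ => simp [pairSum]
  | [a], _, _, _ => simp [pairSum]
  | [a, b], hs, hsum, hpos =>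
    have := Nt_le D a b
    simp only [pairSum, List.map, List.sum_cons, List.sum_nil] at *
    omega
  | a :: b :: c :: t, hs, hsum, hpos =>
    have hz : pairSum D (a :: b :: c :: t) = 0 := by
      apply pairSum_eq_zero D _ hs
      intro x hx y hy
      have hxa : x ≤ a := by
        rcases List.mem_cons.mp hx with h | h
        · omega
        · exact sorted_head_ge hs x h
      have hyb : y ≤ b := by
        rw [List.pairwise_cons] at hs
        simp only [List.tail_cons] at hy
        rcases List.mem_cons.mp hy with h | h
        · omega
        · exact sorted_head_ge hs.2 y h
      have hc : 1 ≤ c := hpos c (by simp)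
      simp only [List.sum_cons] at hsum
      omega
    omega

/-- the pivot lemma -/
lemma pivot (D a : ℕ) (t : List ℕ) (ha : a + 1 ≤ D)
    (hall : ∀ x ∈ t, 1 ≤ x ∧ x ≤ a) :
    (t.map (Nt D a)).sum + t.length + ((t.filter (fun x => D ≤ a + x)).length) * (D-1-a)
      ≤ t.sum + (t.filter (fun x => D ≤ a + x)).length := by
  induction t with
  | nil => simp
  | cons x t ih =>
    have hx := hall x (by simp)
    have ht : ∀ y ∈ t, 1 ≤ y ∧ y ≤ a := fun y hy => hall y (by simp [hy])
    have hNt : Nt D a x = a + x + 1 - D := Nt_eq D a x ha (by omega)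
    by_cases hq : D ≤ a + x
    · rw [List.filter_cons_of_pos (by simpa using hq)]
      have := ih ht
      have hexp : ((t.filter (fun x => D ≤ a + x)).length + 1) * (D-1-a)
          = (t.filter (fun x => D ≤ a + x)).length * (D-1-a) + (D-1-a) := by ring
      simp only [List.map, List.sum_cons, List.length_cons]
      omega
    · rw [List.filter_cons_of_neg (by simpa using hq)]
      have := ih ht
      simp only [List.map, List.sum_cons, List.length_cons]
      omega

lemma filter_length_le (p : ℕ → Bool) (t : List ℕ) : (t.filter p).length ≤ t.length :=
  List.length_filter_le _ _

lemma mem_sum_length : ∀ (t : List ℕ), (∀ y ∈ t, 1 ≤ y) → ∀ x ∈ t, x + t.length ≤ t.sum + 1 := by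
  intro t
  induction t with
  | nil => simp
  | cons y t ih =>
    intro hpos x hx
    have hlen : t.length ≤ t.sum := by
      calc t.length = (t.map (fun _ => 1)).sum := by simp
      _ ≤ (t.map id).sum := by
          apply List.sum_le_sum
          intro i hi; exact hpos i (by simp [hi])
      _ = t.sum := by simp
    rcases List.mem_cons.mp hx with h | h
    · simp only [List.sum_cons, List.length_cons]; omega
    · have := ih (fun y hy => hpos y (by simp [hy])) x h
      have hy1 : 1 ≤ y := hpos y (by simp)
      simp only [List.sum_cons, List.length_cons]
      omega


lemma Wsum_le_one (D : ℕ) (hD : 1 ≤ D) : ∀ (t : List ℕ), (∀ x ∈ t, 1 ≤ x) → t.sum ≤ D →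
    (t.map (Wt D)).sum ≤ 1 := by
  intro t
  induction t with
  | nil => simp
  | cons x r ih =>
    intro hpos hsum
    simp only [List.sum_cons] at hsum
    simp only [List.map, List.sum_cons]
    by_cases hx : x + 1 ≤ D
    · have h0 : Wt D x = 0 := by unfold Wt; omega
      have := ih (fun y hy => hpos y (by simp [hy])) (by omega)
      omega
    · have hr : r = [] := by
        cases r with
        | nil => rfl
        | cons y r' =>
          have h1 : 1 ≤ y := hpos y (by simp)
          simp only [List.sum_cons] at hsum
          omega
      subst hr
      simp only [List.map_nil, List.sum_nil]
      unfold Wt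
      omega

theorem legCount_le (D ℓ : ℕ) (hl : 1 ≤ ℓ) (hD : ℓ ≤ D) (l : List ℕ)
    (hpos : ∀ x ∈ l, 1 ≤ x) (hsort : l.Pairwise (· ≥ ·)) (hsum : l.sum = D + ℓ)
    (hexc : ¬(ℓ = 2 ∧ l = [1,1,1,1])) : legCount D l ≤ ℓ + 3 := by
  match l, hpos, hsort, hsum, hexc with
  | [], _, _, hsum, _ => simp at hsum; omega
  | [a], _, _, hsum, _ =>
    simp only [List.sum_cons, List.sum_nil] at hsum
    simp only [legCount, pairSum, List.map, List.sum_cons, List.sum_nil, Wt]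
    omega
  | a :: b :: t, hpos, hsort, hsum, hexc =>
    have hta : ∀ x ∈ b :: t, x ≤ a := sorted_head_ge hsort
    have ht1pos : ∀ x ∈ b :: t, 1 ≤ x := fun x hx => hpos x (by simp only [List.mem_cons] at hx ⊢; tauto)
    have hsum' : a + (b + t.sum) = D + ℓ := by simpa using hsum
    have ht1sorted : (b :: t).Pairwise (· ≥ ·) := (List.pairwise_cons.mp hsort).2
    have hba : b ≤ a := hta b (by simp)
    have hb1 : 1 ≤ b := ht1pos b (by simp)
    have hlceq : legCount D (a :: b :: t) =
        Wt D a + ((b :: t).map (Wt D)).sum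
        + (((b :: t).map (Nt D a)).sum + pairSum D (b :: t)) := by
      simp only [legCount, pairSum, List.map, List.sum_cons]
      try omega
    by_cases hS : b + t.sum ≤ ℓ
    · -- Case A
      have hWa : Wt D a ≤ ℓ + 1 - (b + t.sum) := by unfold Wt; omega
      have hWt : ((b :: t).map (Wt D)).sum ≤ 1 := by
        apply Wsum_le_one D (by omega) _ ht1pos
        simp only [List.sum_cons]
        omega
      have hN : ((b :: t).map (Nt D a)).sum ≤ b + t.sum := by
        calc ((b :: t).map (Nt D a)).sum ≤ ((b :: t).map id).sum := by
              apply List.sum_le_sum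
              intro y hy
              exact Nt_le_right D a y (by omega)
        _ = b + t.sum := by simp
      have hps : pairSum D (b :: t) ≤ 1 := by
        apply pairSum_le_one D _ ht1sorted _ ht1pos
        simp only [List.sum_cons]
        omega
      rw [hlceq]
      omega
    · -- Case B : b + t.sum ≥ ℓ+1
      have haD : a + 1 ≤ D := by omega
      have hW0 : Wt D a + ((b :: t).map (Wt D)).sum = 0 := by
        have h1 : Wt D a = 0 := by unfold Wt; omega
        have h2 : ((b :: t).map (Wt D)).sum = 0 := by
          apply List.sum_eq_zero
          intro x hx
          simp only [List.mem_map] at hx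
          obtain ⟨y, hy, rfl⟩ := hx
          have : y ≤ a := hta y hy
          unfold Wt; omega
        omega
      rw [hlceq, hW0]
      -- pivot for a over b :: t
      have P1 := pivot D a (b :: t) haD (fun x hx => ⟨ht1pos x hx, hta x hx⟩)
      have hq1len : (((b :: t).filter (fun x => D ≤ a + x)).length) ≤ (b :: t).length :=
        filter_length_le _ _
      cases t with
      | nil =>
        have : Nt D a b ≤ a + b + 1 - D := Nt_le D a b
        simp only [pairSum, List.map, List.sum_cons, List.sum_nil] at *
        omega
      | cons c t2 =>
        have hcb : c ≤ b := sorted_head_ge ht1sorted c (by simp)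
        have hc1 : 1 ≤ c := ht1pos c (by simp)
        by_cases hbc : b + c < D
        · -- all inner pairs vanish
          have hps0 : pairSum D (b :: c :: t2) = 0 := by
            apply pairSum_eq_zero D _ ht1sorted
            intro x hx y hy
            have hxb : x ≤ b := by
              rcases List.mem_cons.mp hx with h | h
              · omega
              · exact sorted_head_ge ht1sorted x h
            have hyc : y ≤ c := by
              simp only [List.tail_cons] at hy
              rcases List.mem_cons.mp hy with h | h
              · omega
              · exact sorted_head_ge (List.pairwise_cons.mp ht1sorted).2 y h
            omega
          rw [hps0]
          rcases Nat.eq_zero_or_pos (((b :: c :: t2).filter (fun x => D ≤ a + x)).length)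
            with h0 | hq1pos
          · have hz : (((b :: c :: t2)).map (Nt D a)).sum = 0 := by
              apply List.sum_eq_zero
              intro x hx
              simp only [List.mem_map] at hx
              obtain ⟨y, hy, rfl⟩ := hx
              have hyq : ¬ (D ≤ a + y) := by
                intro hcon
                have hmem : y ∈ (b :: c :: t2).filter (fun x => D ≤ a + x) := by
                  rw [List.mem_filter]
                  exact ⟨hy, by simpa using hcon⟩
                rw [List.length_eq_zero_iff.mp h0] at hmem
                simp at hmem
              have := Nt_le D a y
              omega
            omega
          · have he1 : D - 1 - a ≤ (((b :: c :: t2).filter (fun x => D ≤ a + x)).length) * (D - 1 - a) :=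
              Nat.le_mul_of_pos_left _ hq1pos
            simp only [List.sum_cons, List.length_cons] at *
            omega
        · -- D ≤ b + c
          cases t2 with
          | nil =>
            -- l = [a,b,c] : only inner pair (b,c)
            have hNbc : Nt D b c ≤ b + c + 1 - D := Nt_le D b c
            have hNab : Nt D a b ≤ a + b + 1 - D := Nt_le D a b
            have hNac : Nt D a c ≤ a + c + 1 - D := Nt_le D a c
            simp only [pairSum, List.map, List.sum_cons, List.sum_nil] at *
            omega
          | cons d t3 =>
            have hdc : d ≤ c := sorted_head_ge (List.pairwise_cons.mp ht1sorted).2 d (by simp)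
            have hd1 : 1 ≤ d := ht1pos d (by simp)
            by_cases hcd : D ≤ c + d
            · -- rigid case
              have ht3pos : ∀ x ∈ t3, 1 ≤ x := fun x hx => ht1pos x (by simp [hx])
              have ht3len : t3.length ≤ t3.sum := by
                calc t3.length = (t3.map (fun _ => 1)).sum := by simp
                _ ≤ (t3.map id).sum := by
                    apply List.sum_le_sum
                    intro i hi; exact ht3pos i hi
                _ = t3.sum := by simp
              have hsum2 : a + b + c + d + t3.sum = D + ℓ := by
                simp only [List.sum_cons] at hsum'
                omega
              have hzero : t3.sum = 0 ∧ ℓ = D ∧ a + b = D ∧ c + d = D := by omega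
              have ht3nil : t3 = [] := by
                cases t3 with
                | nil => rfl
                | cons e t4 =>
                  have h1 := ht3pos e (by simp)
                  have h2 := hzero.1
                  simp only [List.sum_cons] at h2
                  omega
              subst ht3nil
              have hk : b = a ∧ c = a ∧ d = a := by omega
              obtain ⟨h1, h2, h3⟩ := hk
              have hbD : b + 1 ≤ D := by omega
              have hcD : c + 1 ≤ D := by omega
              have hdD : d + 1 ≤ D := by omega
              have e0 : Nt D a b = 1 := by rw [Nt_eq D a b haD hbD]; omega
              have e1 : Nt D a c = 1 := by rw [Nt_eq D a c haD hcD]; omega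
              have e2 : Nt D a d = 1 := by rw [Nt_eq D a d haD hdD]; omega
              have e3 : Nt D b c = 1 := by rw [Nt_eq D b c hbD hcD]; omega
              have e4 : Nt D b d = 1 := by rw [Nt_eq D b d hbD hdD]; omega
              have e5 : Nt D c d = 1 := by rw [Nt_eq D c d hcD hdD]; omega
              by_cases hb1' : a = 1
              · exfalso
                apply hexc
                refine ⟨by omega, ?_⟩
                have h4 : b = 1 ∧ c = 1 ∧ d = 1 := by omega
                rw [hb1', h4.1, h4.2.1, h4.2.2]
              · simp only [pairSum, List.map, List.sum_cons, List.sum_nil,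
                  e0, e1, e2, e3, e4, e5]
                omega
            · -- c + d < D
              have hps2 : pairSum D (c :: d :: t3) = 0 := by
                apply pairSum_eq_zero D _ (List.pairwise_cons.mp ht1sorted).2
                intro x hx y hy
                have hxc : x ≤ c := by
                  rcases List.mem_cons.mp hx with h | h
                  · omega
                  · exact sorted_head_ge (List.pairwise_cons.mp ht1sorted).2 x h
                have hyd : y ≤ d := by
                  simp only [List.tail_cons] at hy
                  rcases List.mem_cons.mp hy with h | h
                  · omega
                  · exact sorted_head_ge
                      (List.pairwise_cons.mp (List.pairwise_cons.mp ht1sorted).2).2 y h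
                omega
              have hbD : b + 1 ≤ D := by omega
              have P2 := pivot D b (c :: d :: t3) hbD
                (fun x hx => ⟨ht1pos x (by simp only [List.mem_cons] at hx ⊢; tauto),
                   sorted_head_ge ht1sorted x hx⟩)
              have hq2len : (((c :: d :: t3).filter (fun x => D ≤ b + x)).length)
                  ≤ (c :: d :: t3).length := filter_length_le _ _
              have hq1two : 2 ≤ (((b :: c :: d :: t3).filter (fun x => D ≤ a + x)).length) := by
                rw [List.filter_cons_of_pos (by simp; omega),
                    List.filter_cons_of_pos (by simp; omega)]
                simp only [List.length_cons]
                omega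
              have hq2one : 1 ≤ (((c :: d :: t3).filter (fun x => D ≤ b + x)).length) := by
                rw [List.filter_cons_of_pos (by simp; omega)]
                simp only [List.length_cons]
                omega
              have he1 : 2 * (D - 1 - a) ≤
                  (((b :: c :: d :: t3).filter (fun x => D ≤ a + x)).length) * (D - 1 - a) :=
                Nat.mul_le_mul_right _ hq1two
              have he2 : 1 * (D - 1 - b) ≤
                  (((c :: d :: t3).filter (fun x => D ≤ b + x)).length) * (D - 1 - b) :=
                Nat.mul_le_mul_right _ hq2one
              have hexp : pairSum D (b :: c :: d :: t3) =
                  ((c :: d :: t3).map (Nt D b)).sum + pairSum D (c :: d :: t3) := rfl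
              rw [hexp, hps2]
              simp only [List.sum_cons, List.length_cons] at *
              omega



section Graph
variable {n : ℕ} {G : SimpleGraph (Fin n)}


lemma path_unique (htree : G.IsTree) {u v : Fin n} {p q : G.Walk u v}
    (hp : p.IsPath) (hq : q.IsPath) : p = q :=
  (htree.existsUnique_path u v).unique hp hq

lemma path_length (htree : G.IsTree) {u v : Fin n} (p : G.Walk u v) (hp : p.IsPath) :
    p.length = G.dist u v := by
  obtain ⟨q, hq⟩ := htree.isConnected.exists_walk_length_eq_dist u v
  have hb := q.bypass_isPath
  have h1 : p = q.bypass := path_unique htree hp hb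
  have h2 : q.bypass.length ≤ q.length := q.length_bypass_le
  have h3 : G.dist u v ≤ q.bypass.length := dist_le _
  have h4 := congrArg SimpleGraph.Walk.length h1
  omega

variable {c : Fin n}

lemma dist0 (htree : G.IsTree) {v : Fin n} : G.dist c v = 0 ↔ v = c := by
  rw [htree.isConnected.dist_eq_zero_iff]
  exact eq_comm

lemma exists_parent (htree : G.IsTree) {v : Fin n} (hv : v ≠ c) :
    ∃ w, G.Adj w v ∧ G.dist c w + 1 = G.dist c v := by
  have hpos : 0 < G.dist c v := htree.isConnected.pos_dist_of_ne (Ne.symm hv)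
  obtain ⟨p, hp⟩ := htree.isConnected.exists_walk_length_eq_dist c v
  cases hq : p.reverse with
  | nil =>
    have := congrArg SimpleGraph.Walk.length hq
    rw [SimpleGraph.Walk.length_reverse] at this
    simp at this
    omega
  | cons hadj q =>
    rename_i w
    refine ⟨w, hadj.symm, ?_⟩
    have hlen : q.length + 1 = G.dist c v := by
      have := congrArg SimpleGraph.Walk.length hq
      rw [SimpleGraph.Walk.length_reverse] at this
      simp only [SimpleGraph.Walk.length_cons] at this
      omega
    have h1 : G.dist c w ≤ q.length := by
      have := SimpleGraph.dist_le q.reverse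
      simpa [SimpleGraph.Walk.length_reverse] using this
    have h2 : G.dist c v ≤ G.dist c w + 1 := by
      have ht := htree.isConnected.dist_triangle (u := c) (v := w) (w := v)
      have : G.dist w v ≤ 1 := by
        have := SimpleGraph.dist_le (SimpleGraph.Walk.cons hadj.symm SimpleGraph.Walk.nil)
        simpa using this
      omega
    omega

variable {pr : Fin n → Fin n}

/-- parent function specification -/
def PrSpec (G : SimpleGraph (Fin n)) (c : Fin n) (pr : Fin n → Fin n) : Prop :=
  pr c = c ∧ ∀ v, v ≠ c → G.Adj (pr v) v ∧ G.dist c (pr v) + 1 = G.dist c v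

lemma prspec_exists (htree : G.IsTree) (c : Fin n) : ∃ pr, PrSpec G c pr := by
  have : ∀ v : Fin n, ∃ w, (v = c → w = c) ∧ (v ≠ c → G.Adj w v ∧ G.dist c w + 1 = G.dist c v) := by
    intro v
    by_cases h : v = c
    · exact ⟨c, fun _ => rfl, fun h' => absurd h h'⟩
    · obtain ⟨w, hw⟩ := exists_parent htree h
      exact ⟨w, fun h' => absurd h' h, fun _ => hw⟩
  choose pr h1 h2 using this
  exact ⟨pr, h1 c rfl, h2⟩

lemma dep_iter (hpr : PrSpec G c pr) {u : Fin n} :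
    ∀ j, j ≤ G.dist c u → G.dist c (pr^[j] u) + j = G.dist c u := by
  intro j
  induction j with
  | zero => simp
  | succ j ih =>
    intro hj
    have h1 := ih (by omega)
    have hne : pr^[j] u ≠ c := by
      intro h
      rw [h] at h1
      rw [SimpleGraph.dist_self] at h1
      omega
    have h2 := (hpr.2 _ hne).2
    rw [Function.iterate_succ_apply']
    omega

lemma canonical_path (htree : G.IsTree) (hpr : PrSpec G c pr) :
    ∀ (k : ℕ) (v : Fin n), G.dist c v = k →
    ∃ p : G.Walk c v, p.IsPath ∧ p.length = k ∧
      (∀ x, x ∈ p.support → ∃ j, j ≤ k ∧ x = pr^[j] v) := by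
  intro k
  induction k with
  | zero =>
    intro v hv
    have hvc : v = c := (dist0 htree).mp hv
    subst hvc
    exact ⟨SimpleGraph.Walk.nil, by simp, by simp, by simp⟩
  | succ k ih =>
    intro v hv
    have hvc : v ≠ c := by
      intro h; subst h; rw [SimpleGraph.dist_self] at hv; omega
    obtain ⟨hadj, hd⟩ := hpr.2 v hvc
    obtain ⟨q, hq, hlen, hsupp⟩ := ih (pr v) (by omega)
    have hvs : v ∉ q.support := by
      intro hmem
      obtain ⟨j, hj, hvj⟩ := hsupp v hmem
      rw [← Function.iterate_succ_apply] at hvj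
      have := dep_iter hpr (u := v) (j+1) (by omega)
      rw [← hvj] at this
      omega
    refine ⟨q.concat hadj, ?_, ?_, ?_⟩
    · rw [SimpleGraph.Walk.isPath_def, SimpleGraph.Walk.support_concat,
        List.nodup_append]
      refine ⟨hq.support_nodup, by simp, by intro a ha b hb h; rw [List.mem_singleton] at hb; rw [h, hb] at ha; exact hvs ha⟩
    · rw [SimpleGraph.Walk.length_concat]; omega
    · intro x hx
      rw [SimpleGraph.Walk.support_concat, List.mem_append] at hx
      rcases hx with h | h
      · obtain ⟨j, hj, hxj⟩ := hsupp x h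
        exact ⟨j + 1, by omega, by rw [hxj, ← Function.iterate_succ_apply]⟩
      · simp only [List.mem_singleton] at h
        exact ⟨0, by omega, by simp [h]⟩

lemma parent_unique (htree : G.IsTree) (hpr : PrSpec G c pr) {w v : Fin n}
    (hadj : G.Adj w v) (hd : G.dist c w + 1 = G.dist c v) : w = pr v := by
  have hvc : v ≠ c := by
    intro h; subst h
    rw [SimpleGraph.dist_self] at hd; omega
  obtain ⟨q, hq, hlen, hsupp⟩ := canonical_path htree hpr (G.dist c w) w rfl
  have hvs : v ∉ q.support := by
    intro hmem
    obtain ⟨j, hj, hvj⟩ := hsupp v hmem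
    have := dep_iter hpr (u := w) j hj
    rw [← hvj] at this
    omega
  have hp : (q.concat hadj).IsPath := by
    rw [SimpleGraph.Walk.isPath_def, SimpleGraph.Walk.support_concat,
        List.nodup_append]
    exact ⟨hq.support_nodup, by simp, by intro a ha b hb h; rw [List.mem_singleton] at hb; rw [h, hb] at ha; exact hvs ha⟩
  obtain ⟨p0, hp0, hlen0, hsupp0⟩ := canonical_path htree hpr (G.dist c v) v rfl
  have heq : q.concat hadj = p0 := path_unique htree hp hp0
  have hw : w ∈ (q.concat hadj).support := by
    rw [SimpleGraph.Walk.support_concat, List.mem_append]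
    exact Or.inl q.end_mem_support
  rw [heq] at hw
  obtain ⟨j, hj, hwj⟩ := hsupp0 w hw
  have := dep_iter hpr (u := v) j hj
  rw [← hwj] at this
  have hj1 : j = 1 := by omega
  rw [hj1] at hwj
  simpa using hwj

lemma adj_dep_ne (htree : G.IsTree) (hpr : PrSpec G c pr) {x y : Fin n}
    (hadj : G.Adj x y) : G.dist c x ≠ G.dist c y := by
  intro heq
  have hxc : x ≠ c := by
    intro hxeq
    have h0 : G.dist c y = 0 := by rw [← heq, hxeq, SimpleGraph.dist_self]
    have hy := (dist0 htree).mp h0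
    exact G.irrefl (by rw [hxeq, hy] at hadj; exact hadj)
  have hyc : y ≠ c := by
    intro hyeq
    have h0 : G.dist c x = 0 := by rw [heq, hyeq, SimpleGraph.dist_self]
    have hx := (dist0 htree).mp h0
    exact G.irrefl (by rw [hyeq, hx] at hadj; exact hadj)
  obtain ⟨q, hq, hlen, hsupp⟩ := canonical_path htree hpr (G.dist c x) x rfl
  have hys : y ∉ q.support := by
    intro hmem
    obtain ⟨j, hj, hyj⟩ := hsupp y hmem
    have := dep_iter hpr (u := x) j hj
    rw [← hyj] at this
    have hj0 : j = 0 := by omega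
    rw [hj0] at hyj
    simp at hyj
    exact G.irrefl (hyj ▸ hadj)
  have hp : (q.concat hadj).IsPath := by
    rw [SimpleGraph.Walk.isPath_def, SimpleGraph.Walk.support_concat,
        List.nodup_append]
    exact ⟨hq.support_nodup, by simp, by intro a ha b hb h; rw [List.mem_singleton] at hb; rw [h, hb] at ha; exact hys ha⟩
  obtain ⟨p0, hp0, hlen0, _⟩ := canonical_path htree hpr (G.dist c y) y rfl
  have heq2 : q.concat hadj = p0 := path_unique htree hp hp0
  have := congrArg SimpleGraph.Walk.length heq2
  rw [SimpleGraph.Walk.length_concat] at this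
  omega

lemma adj_consec (htree : G.IsTree) (hpr : PrSpec G c pr) {x y : Fin n}
    (hadj : G.Adj x y) :
    G.dist c y = G.dist c x + 1 ∨ G.dist c x = G.dist c y + 1 := by
  have hne := adj_dep_ne htree hpr hadj
  have h1 : G.dist c y ≤ G.dist c x + 1 := by
    have ht := htree.isConnected.dist_triangle (u := c) (v := x) (w := y)
    have : G.dist x y ≤ 1 := by
      have := SimpleGraph.dist_le (SimpleGraph.Walk.cons hadj SimpleGraph.Walk.nil)
      simpa using this
    omega
  have h2 : G.dist c x ≤ G.dist c y + 1 := by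
    have ht := htree.isConnected.dist_triangle (u := c) (v := y) (w := x)
    have : G.dist y x ≤ 1 := by
      have := SimpleGraph.dist_le (SimpleGraph.Walk.cons hadj.symm SimpleGraph.Walk.nil)
      simpa using this
    omega
  omega


/-- the leg (branch) of a vertex: the iterated parent at depth 1 -/
noncomputable def Lg (G : SimpleGraph (Fin n)) (c : Fin n) (pr : Fin n → Fin n) (v : Fin n) : Fin n :=
  pr^[G.dist c v - 1] v

lemma dep_pos (htree : G.IsTree) {v : Fin n} (hv : v ≠ c) : 1 ≤ G.dist c v := by
  have := (dist0 (c := c) htree (v := v))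
  rcases Nat.eq_zero_or_pos (G.dist c v) with h | h
  · exact absurd (this.mp h) hv
  · omega

lemma Lg_dep1 (htree : G.IsTree) (hpr : PrSpec G c pr) {v : Fin n} (hv : v ≠ c) :
    G.dist c (Lg G c pr v) = 1 ∧ G.Adj c (Lg G c pr v) := by
  have h1 := dep_pos htree hv
  have h2 := dep_iter hpr (u := v) (G.dist c v - 1) (by omega)
  have h3 : G.dist c (Lg G c pr v) = 1 := by unfold Lg; omega
  exact ⟨h3, SimpleGraph.dist_eq_one_iff_adj.mp h3⟩

lemma Lg_self (hv : G.dist c v = 1) : Lg G c pr v = v := by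
  unfold Lg; rw [hv]; simp

lemma Lg_ne_c (htree : G.IsTree) (hpr : PrSpec G c pr) {v : Fin n} (hv : v ≠ c) :
    Lg G c pr v ≠ c := by
  intro h
  have := (Lg_dep1 htree hpr hv).1
  rw [h, SimpleGraph.dist_self] at this
  omega

lemma Lg_pr (hpr : PrSpec G c pr) {v : Fin n} (hv : 2 ≤ G.dist c v) :
    Lg G c pr (pr v) = Lg G c pr v := by
  have hvc : v ≠ c := by
    intro h; subst h; rw [SimpleGraph.dist_self] at hv; omega
  have hd := (hpr.2 v hvc).2
  unfold Lg
  have h1 : G.dist c (pr v) - 1 = G.dist c v - 2 := by omega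
  have h2 : G.dist c v - 1 = (G.dist c v - 2) + 1 := by omega
  rw [h1, h2, Function.iterate_succ_apply]

lemma Lg_iter (hpr : PrSpec G c pr) {v : Fin n} :
    ∀ j, j + 1 ≤ G.dist c v → Lg G c pr (pr^[j] v) = Lg G c pr v := by
  intro j
  induction j with
  | zero => intro _; rfl
  | succ j ih =>
    intro hj
    have h1 := ih (by omega)
    have h2 := dep_iter hpr (u := v) j (by omega)
    have h3 : 2 ≤ G.dist c (pr^[j] v) := by omega
    rw [Function.iterate_succ_apply', Lg_pr hpr h3, h1]

lemma ndeg_ge3 {w y1 y2 y3 : Fin n} (h1 : G.Adj w y1) (h2 : G.Adj w y2) (h3 : G.Adj w y3)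
    (h12 : y1 ≠ y2) (h13 : y1 ≠ y3) (h23 : y2 ≠ y3) : 3 ≤ ndeg G w := by
  classical
  rw [ndeg, Nat.card_eq_fintype_card]
  have hcard : ({⟨y1, h1⟩, ⟨y2, h2⟩, ⟨y3, h3⟩} : Finset {x : Fin n // G.Adj w x}).card = 3 := by
    rw [Finset.card_insert_of_notMem (by simp [Subtype.ext_iff, h12, h13]),
        Finset.card_insert_of_notMem (by simp [Subtype.ext_iff, h23])]
    simp
  exact hcard ▸ Finset.card_le_univ _

lemma leg_inj (hdeg : ∀ w : Fin n, w ≠ c → ¬ 3 ≤ ndeg G w)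
    (htree : G.IsTree) (hpr : PrSpec G c pr) :
    ∀ (k : ℕ) (u v : Fin n), u ≠ c → v ≠ c → G.dist c u = k → G.dist c v = k →
      Lg G c pr u = Lg G c pr v → u = v := by
  intro k
  induction k with
  | zero =>
    intro u v hu _ hdu _ _
    exact absurd ((dist0 htree).mp hdu) hu
  | succ k ih =>
    intro u v hu hv hdu hdv hL
    by_cases hk : k = 0
    · subst hk
      have h1 : Lg G c pr u = u := Lg_self hdu
      have h2 : Lg G c pr v = v := Lg_self hdv
      rw [h1, h2] at hL
      exact hL
    · by_contra hne
      -- parents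
      have hdu' := (hpr.2 u hu).2
      have hdv' := (hpr.2 v hv).2
      have hpru : pr u ≠ c := by
        intro h
        rw [h, SimpleGraph.dist_self] at hdu'
        omega
      have hprv : pr v ≠ c := by
        intro h
        rw [h, SimpleGraph.dist_self] at hdv'
        omega
      have hLu : Lg G c pr (pr u) = Lg G c pr u := Lg_pr hpr (by omega)
      have hLv : Lg G c pr (pr v) = Lg G c pr v := Lg_pr hpr (by omega)
      have hpp : pr u = pr v := by
        apply ih (pr u) (pr v) hpru hprv (by omega) (by omega)
        rw [hLu, hLv, hL]
      set w := pr u with hw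
      have hadj1 : G.Adj w u := (hpr.2 u hu).1
      have hadj2 : G.Adj w v := by rw [hpp]; exact (hpr.2 v hv).1
      have hwc : w ≠ c := hpru
      have hadj3 : G.Adj w (pr w) := ((hpr.2 w hwc).1).symm
      have hdw : G.dist c w = k := by omega
      have hdpw : G.dist c (pr w) + 1 = k := (hpr.2 w hwc).2 ▸ by omega
      have hne1 : u ≠ pr w := by
        intro h; rw [← h] at hdpw; omega
      have hne2 : v ≠ pr w := by
        intro h; rw [← h] at hdpw; omega
      exact hdeg w hwc (ndeg_ge3 hadj1 hadj2 hadj3 hne (Ne.symm (Ne.symm hne1)) hne2)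

lemma anc_eq (hdeg : ∀ w : Fin n, w ≠ c → ¬ 3 ≤ ndeg G w) (htree : G.IsTree) (hpr : PrSpec G c pr) {u v : Fin n}
    (hu : u ≠ c) (hv : v ≠ c) (hL : Lg G c pr u = Lg G c pr v)
    (hle : G.dist c u ≤ G.dist c v) : u = pr^[G.dist c v - G.dist c u] v := by
  have hdu := dep_pos htree hu
  have hdv := dep_pos htree hv
  set x := pr^[G.dist c v - G.dist c u] v with hx
  have hdx : G.dist c x + (G.dist c v - G.dist c u) = G.dist c v :=
    dep_iter hpr _ (by omega)
  have hxc : x ≠ c := by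
    intro h
    rw [h, SimpleGraph.dist_self] at hdx
    omega
  have hLx : Lg G c pr x = Lg G c pr v := by
    rcases Nat.eq_zero_or_pos (G.dist c v - G.dist c u) with h | h
    · rw [hx, h]; rfl
    · exact Lg_iter hpr _ (by omega)
  have hdxu : G.dist c x = G.dist c u := by omega
  have hLL : Lg G c pr u = Lg G c pr x := by rw [hL, hLx]
  exact leg_inj hdeg htree hpr (G.dist c u) u x hu hxc rfl hdxu hLL

lemma dist_chain (htree : G.IsTree) (hpr : PrSpec G c pr) {v : Fin n} :
    ∀ j, j ≤ G.dist c v → G.dist v (pr^[j] v) ≤ j := by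
  intro j
  induction j with
  | zero => simp
  | succ j ih =>
    intro hj
    have h1 := ih (by omega)
    have h2 := dep_iter hpr (u := v) j (by omega)
    have hne : pr^[j] v ≠ c := by
      intro h; rw [h, SimpleGraph.dist_self] at h2; omega
    have hadj := (hpr.2 _ hne).1
    have ht := htree.isConnected.dist_triangle (u := v) (v := pr^[j] v) (w := pr^[j+1] v)
    have : G.dist (pr^[j] v) (pr^[j+1] v) ≤ 1 := by
      rw [Function.iterate_succ_apply']
      have := SimpleGraph.dist_le (SimpleGraph.Walk.cons hadj.symm SimpleGraph.Walk.nil)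
      simpa using this
    omega

lemma dist_same_leg (hdeg : ∀ w : Fin n, w ≠ c → ¬ 3 ≤ ndeg G w) (htree : G.IsTree) (hpr : PrSpec G c pr) {u v : Fin n}
    (hu : u ≠ c) (hv : v ≠ c) (hL : Lg G c pr u = Lg G c pr v)
    (hle : G.dist c u ≤ G.dist c v) : G.dist u v = G.dist c v - G.dist c u := by
  have hanc := anc_eq hdeg htree hpr hu hv hL hle
  have h1 : G.dist v (pr^[G.dist c v - G.dist c u] v) ≤ G.dist c v - G.dist c u :=
    dist_chain htree hpr _ (by omega)
  rw [← hanc] at h1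
  have h2 : G.dist c v ≤ G.dist c u + G.dist u v :=
    htree.isConnected.dist_triangle
  have h3 : G.dist u v = G.dist v u := SimpleGraph.dist_comm ..
  omega

lemma walk_leg (htree : G.IsTree) (hpr : PrSpec G c pr) :
    ∀ {x y : Fin n} (p : G.Walk x y), x ≠ c → y ≠ c → c ∉ p.support →
      Lg G c pr x = Lg G c pr y := by
  intro x y p
  induction p with
  | nil => intro _ _ _; rfl
  | cons hadj q ih =>
    rename_i a b d
    intro ha hd hsup
    rw [SimpleGraph.Walk.support_cons, List.mem_cons] at hsup
    push_neg at hsup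
    have hbc : b ≠ c := by
      intro h
      exact hsup.2 (h ▸ q.start_mem_support)
    have hab : Lg G c pr a = Lg G c pr b := by
      rcases adj_consec htree hpr hadj with h | h
      · -- dist c b = dist c a + 1, so a = pr b
        have hpa : a = pr b := parent_unique htree hpr hadj (by omega)
        have h2 : 2 ≤ G.dist c b := by
          have := dep_pos htree ha
          omega
        rw [hpa]
        exact Lg_pr hpr h2
      · -- b = pr a
        have hpb : b = pr a := parent_unique htree hpr hadj.symm (by omega)
        have h2 : 2 ≤ G.dist c a := by
          have := dep_pos htree hbc
          omega
        rw [hpb]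
        exact (Lg_pr hpr h2).symm
    rw [hab]
    exact ih hbc hd hsup.2

lemma dist_cross (htree : G.IsTree) (hpr : PrSpec G c pr) {u v : Fin n}
    (hu : u ≠ c) (hv : v ≠ c) (hL : Lg G c pr u ≠ Lg G c pr v) :
    G.dist u v = G.dist c u + G.dist c v := by
  have h1 : G.dist u v ≤ G.dist c u + G.dist c v := by
    have := htree.isConnected.dist_triangle (u := u) (v := c) (w := v)
    have h2 : G.dist u c = G.dist c u := SimpleGraph.dist_comm ..
    omega
  obtain ⟨p, hp⟩ := htree.isConnected.exists_walk_length_eq_dist u v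
  have hcs : c ∈ p.support := by
    by_contra hcs
    exact hL (walk_leg htree hpr p hu hv hcs)
  have hsplit := p.take_spec hcs
  have hlen : (p.takeUntil c hcs).length + (p.dropUntil c hcs).length = p.length := by
    have := congrArg SimpleGraph.Walk.length hsplit
    rw [SimpleGraph.Walk.length_append] at this
    omega
  have ht : G.dist u c ≤ (p.takeUntil c hcs).length := SimpleGraph.dist_le _
  have hd : G.dist c v ≤ (p.dropUntil c hcs).length := SimpleGraph.dist_le _
  have h2 : G.dist u c = G.dist c u := SimpleGraph.dist_comm ..
  omega


/-! ### Counting -/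

/-- the interval lemma -/
lemma interval_finset (S : Finset ℕ) (h1 : ∀ x ∈ S, 1 ≤ x)
    (h2 : ∀ x ∈ S, 2 ≤ x → x - 1 ∈ S) : S = Finset.Icc 1 S.card := by
  have hdown : ∀ j x, x ∈ S → j + 1 ≤ x → x - j ∈ S := by
    intro j
    induction j with
    | zero => intro x hx _; simpa using hx
    | succ j ih =>
      intro x hx hj
      have hx' : x - j ∈ S := ih x hx (by omega)
      have h3 := h2 _ hx' (by omega)
      have h4 : x - j - 1 = x - (j+1) := by omega
      rwa [h4] at h3
  rcases S.eq_empty_or_nonempty with h | h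
  · simp [h]
  · have hMS : S.max' h ∈ S := S.max'_mem h
    have hsub1 : S ⊆ Icc 1 (S.max' h) := fun x hx => mem_Icc.mpr ⟨h1 x hx, S.le_max' x hx⟩
    have hsub2 : Icc 1 (S.max' h) ⊆ S := by
      intro k hk
      rw [mem_Icc] at hk
      have h5 := hdown (S.max' h - k) _ hMS (by omega)
      have h6 : S.max' h - (S.max' h - k) = k := by omega
      rwa [h6] at h5
    have hSeq : S = Icc 1 (S.max' h) := Finset.Subset.antisymm hsub1 hsub2
    have hc : S.card = S.max' h := by
      have := congrArg Finset.card hSeq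
      rwa [Nat.card_Icc, Nat.add_sub_cancel] at this
    rw [hc]
    exact hSeq

variable (G c pr) in
noncomputable def Leg (z : Fin n) : Finset (Fin n) :=
  univ.filter (fun v => v ≠ c ∧ Lg G c pr v = z)

variable (G c pr) in
noncomputable def legm (z : Fin n) : ℕ := (Leg G c pr z).card

variable (G c) in
noncomputable def legSet : Finset (Fin n) := univ.filter (fun z => G.dist c z = 1)

lemma icc_product_count (D : ℕ) (hD1 : 1 ≤ D) (a b : ℕ) :
    (((Finset.Icc 1 a) ×ˢ (Finset.Icc 1 b)).filter (fun q : ℕ × ℕ => q.1 + q.2 = D)).card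
      = Nt D a b := by
  have hbij : (Finset.Icc (D - min b (D-1)) (min a (D-1))).card =
      (((Finset.Icc 1 a) ×ˢ (Finset.Icc 1 b)).filter (fun q : ℕ × ℕ => q.1 + q.2 = D)).card := by
    apply Finset.card_bij (fun k _ => (k, D - k))
    · intro k hk
      rw [mem_Icc] at hk
      simp only [mem_filter, mem_product, mem_Icc]
      omega
    · intro k1 h1 k2 h2 heq
      exact (Prod.ext_iff.mp heq).1
    · intro q hq
      simp only [mem_filter, mem_product, mem_Icc] at hq
      refine ⟨q.1, by rw [mem_Icc]; omega, ?_⟩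
      have : D - q.1 = q.2 := by omega
      rw [this]
  rw [← hbij, Nat.card_Icc, Nt]
  have h1 : min a (D-1) ≤ a := min_le_left _ _
  have h2 : min b (D-1) ≤ b := min_le_left _ _
  have h3 : min a (D-1) ≤ D-1 := min_le_right _ _
  have h4 : min b (D-1) ≤ D-1 := min_le_right _ _
  omega


section WithHyps
variable (hdeg : ∀ w : Fin n, w ≠ c → ¬ 3 ≤ ndeg G w)
  (htree : G.IsTree) (hpr : PrSpec G c pr)
include hdeg htree hpr

lemma dep_injOn_leg {z : Fin n} {u v : Fin n} (hu : u ∈ Leg G c pr z) (hv : v ∈ Leg G c pr z)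
    (hd : G.dist c u = G.dist c v) : u = v := by
  rw [Leg, mem_filter] at hu hv
  exact leg_inj hdeg htree hpr (G.dist c v) u v hu.2.1 hv.2.1 hd rfl
    (by rw [hu.2.2, hv.2.2])

lemma leg_image (z : Fin n) :
    (Leg G c pr z).image (fun v => G.dist c v) = Finset.Icc 1 (legm G c pr z) := by
  have hinj : Set.InjOn (fun v => G.dist c v) (Leg G c pr z) := by
    intro u hu v hv hd
    exact dep_injOn_leg hdeg htree hpr (by simpa using hu) (by simpa using hv) hd
  have hcard : ((Leg G c pr z).image (fun v => G.dist c v)).card = legm G c pr z := by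
    rw [Finset.card_image_of_injOn hinj]; rfl
  rw [← hcard]
  apply interval_finset
  · intro x hx
    rw [Finset.mem_image] at hx
    obtain ⟨v, hv, rfl⟩ := hx
    rw [Leg, mem_filter] at hv
    exact dep_pos htree hv.2.1
  · intro x hx h2x
    rw [Finset.mem_image] at hx ⊢
    obtain ⟨v, hv, rfl⟩ := hx
    rw [Leg, mem_filter] at hv
    refine ⟨pr v, ?_, ?_⟩
    · rw [Leg, mem_filter]
      have hd := (hpr.2 v hv.2.1).2
      refine ⟨mem_univ _, ?_, ?_⟩
      · intro h
        rw [h, SimpleGraph.dist_self] at hd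
        omega
      · rw [Lg_pr hpr (by omega), hv.2.2]
    · have hd := (hpr.2 v hv.2.1).2
      omega

lemma exists_at_depth {z : Fin n} {k : ℕ} (hk : 1 ≤ k) (hk2 : k ≤ legm G c pr z) :
    ∃ v ∈ Leg G c pr z, G.dist c v = k := by
  have := leg_image hdeg htree hpr z
  have hmem : k ∈ (Leg G c pr z).image (fun v => G.dist c v) := by
    rw [this, mem_Icc]; omega
  rw [Finset.mem_image] at hmem
  obtain ⟨v, hv, hvk⟩ := hmem
  exact ⟨v, hv, hvk⟩

variable (D : ℕ) (hD1 : 1 ≤ D)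
include hD1

lemma leg_deep_count (z : Fin n) :
    ((Leg G c pr z).filter (fun v => D ≤ G.dist c v)).card = Wt D (legm G c pr z) := by
  have hinj : Set.InjOn (fun v => G.dist c v)
      ((Leg G c pr z).filter (fun v => D ≤ G.dist c v)) := by
    intro u hu v hv hd
    simp only [coe_filter, Set.mem_setOf_eq] at hu hv
    exact dep_injOn_leg hdeg htree hpr (by simpa using hu.1) (by simpa using hv.1) hd
  rw [← Finset.card_image_of_injOn hinj]
  have h1 : ((Leg G c pr z).filter (fun v => D ≤ G.dist c v)).image (fun v => G.dist c v)
      = ((Leg G c pr z).image (fun v => G.dist c v)).filter (fun k => D ≤ k) := by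
    rw [Finset.filter_image]
  rw [h1, leg_image hdeg htree hpr z]
  have h2 : (Finset.Icc 1 (legm G c pr z)).filter (fun k => D ≤ k)
      = Finset.Icc D (legm G c pr z) := by
    ext k
    simp only [mem_filter, mem_Icc]
    omega
  rw [h2, Nat.card_Icc, Wt]

end WithHyps

variable (G D) in
noncomputable def OPf : Finset (Fin n × Fin n) :=
  univ.filter (fun p => p.1 ≠ p.2 ∧ G.dist p.1 p.2 = D)

variable (G D) in
noncomputable def PFf : Finset (Fin n × Fin n) :=
  univ.filter (fun p => p.1 < p.2 ∧ G.dist p.1 p.2 = D)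

variable (G c D) in
noncomputable def Vdeep : Finset (Fin n) :=
  univ.filter (fun v => v ≠ c ∧ D ≤ G.dist c v)

variable (G c pr D) in
noncomputable def Bset : Finset (Fin n × Fin n) :=
  (OPf G D).filter (fun p => p.1 = c ∨ p.2 = c ∨ Lg G c pr p.1 = Lg G c pr p.2)

variable (G c pr D) in
noncomputable def A3set : Finset (Fin n × Fin n) :=
  (OPf G D).filter (fun p => ¬(p.1 = c ∨ p.2 = c ∨ Lg G c pr p.1 = Lg G c pr p.2))

lemma OP_card_eq {D : ℕ} : (OPf G D).card = 2 * (PFf G D).card := by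
  classical
  have h1 : OPf G D = (PFf G D) ∪ (univ.filter (fun p : Fin n × Fin n => p.2 < p.1 ∧ G.dist p.1 p.2 = D)) := by
    ext p
    simp only [OPf, PFf, mem_union, mem_filter, mem_univ, true_and]
    constructor
    · rintro ⟨hne, hd⟩
      rcases lt_or_gt_of_ne hne with h | h
      · exact Or.inl ⟨h, hd⟩
      · exact Or.inr ⟨h, hd⟩
    · rintro (⟨h, hd⟩ | ⟨h, hd⟩)
      · exact ⟨ne_of_lt h, hd⟩
      · exact ⟨(ne_of_lt h).symm, hd⟩
  have h2 : Disjoint (PFf G D) (univ.filter (fun p : Fin n × Fin n => p.2 < p.1 ∧ G.dist p.1 p.2 = D)) := by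
    rw [Finset.disjoint_left]
    intro p hp hp'
    simp only [PFf, mem_filter] at hp hp'
    exact absurd hp'.2.1 (not_lt_of_gt hp.2.1)
  have h3 : (univ.filter (fun p : Fin n × Fin n => p.2 < p.1 ∧ G.dist p.1 p.2 = D)).card
      = (PFf G D).card := by
    apply Finset.card_bij (fun p _ => (p.2, p.1))
    · intro p hp
      simp only [PFf, mem_filter, mem_univ, true_and] at hp ⊢
      exact ⟨hp.1, by rw [SimpleGraph.dist_comm]; exact hp.2⟩
    · intro p hp q hq heq
      have := Prod.ext_iff.mp heq
      exact Prod.ext this.2 this.1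
    · intro q hq
      simp only [PFf, mem_filter, mem_univ, true_and] at hq
      refine ⟨(q.2, q.1), ?_, rfl⟩
      simp only [mem_filter, mem_univ, true_and]
      exact ⟨hq.1, by rw [SimpleGraph.dist_comm]; exact hq.2⟩
  rw [h1, Finset.card_union_of_disjoint h2, h3]
  omega

lemma OP_split {D : ℕ} : (OPf G D).card = (Bset G c pr D).card + (A3set G c pr D).card := by
  rw [Bset, A3set]
  exact (Finset.card_filter_add_card_filter_not _).symm

section MoreHyps
variable (hdeg : ∀ w : Fin n, w ≠ c → ¬ 3 ≤ ndeg G w)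
  (htree : G.IsTree) (hpr : PrSpec G c pr) {D : ℕ} (hD1 : 1 ≤ D)
include hdeg htree hpr

lemma B_dep_ne {p : Fin n × Fin n} (hp : p ∈ Bset G c pr D) :
    G.dist c p.1 ≠ G.dist c p.2 := by
  simp only [Bset, OPf, mem_filter, mem_univ, true_and] at hp
  obtain ⟨⟨hne, _⟩, hB⟩ := hp
  intro heq
  rcases hB with h | h | h
  · rw [h] at heq hne
    rw [SimpleGraph.dist_self] at heq
    exact hne ((dist0 htree).mp heq.symm).symm
  · rw [h] at heq hne
    rw [SimpleGraph.dist_self] at heq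
    exact hne ((dist0 htree).mp heq)
  · by_cases h1 : p.1 = c
    · rw [h1] at heq hne
      rw [SimpleGraph.dist_self] at heq
      exact hne ((dist0 htree).mp heq.symm).symm
    · by_cases h2 : p.2 = c
      · rw [h2] at heq hne
        rw [SimpleGraph.dist_self] at heq
        exact hne ((dist0 htree).mp heq)
      · exact hne (leg_inj hdeg htree hpr (G.dist c p.2) p.1 p.2 h1 h2 heq rfl h)

include hD1 in
lemma B_first {p : Fin n × Fin n} (hp : p ∈ Bset G c pr D)
    (hlt : G.dist c p.1 < G.dist c p.2) :
    p.1 = pr^[D] p.2 ∧ p.2 ∈ Vdeep G c D := by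
  simp only [Bset, OPf, mem_filter, mem_univ, true_and] at hp
  obtain ⟨⟨hne, hd⟩, hB⟩ := hp
  have hp2c : p.2 ≠ c := by
    intro h
    rw [h, SimpleGraph.dist_self] at hlt
    omega
  by_cases h1 : p.1 = c
  · have hdist : G.dist c p.2 = D := by rw [← hd, h1]
    have hit := dep_iter hpr (u := p.2) D (by omega)
    have : pr^[D] p.2 = c := by
      apply (dist0 htree).mp
      omega
    refine ⟨by rw [h1, this], ?_⟩
    simp only [Vdeep, mem_filter, mem_univ, true_and]
    exact ⟨hp2c, by omega⟩
  · have h2 : p.2 ≠ c := hp2c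
    have hLeq : Lg G c pr p.1 = Lg G c pr p.2 := by
      rcases hB with h | h | h
      · exact absurd h h1
      · exact absurd h h2
      · exact h
    have hds := dist_same_leg hdeg htree hpr h1 h2 hLeq (by omega)
    have hdep1 : 1 ≤ G.dist c p.1 := dep_pos htree h1
    have hanc := anc_eq hdeg htree hpr h1 h2 hLeq (by omega)
    have hDeq : G.dist c p.2 - G.dist c p.1 = D := by omega
    rw [hDeq] at hanc
    refine ⟨hanc, ?_⟩
    simp only [Vdeep, mem_filter, mem_univ, true_and]
    exact ⟨h2, by omega⟩

include hD1 in
lemma Blt_card :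
    ((Bset G c pr D).filter (fun p => G.dist c p.1 < G.dist c p.2)).card
      = (Vdeep G c D).card := by
  apply Finset.card_bij (fun p _ => p.2)
  · intro p hp
    rw [mem_filter] at hp
    exact (B_first hdeg htree hpr hD1 hp.1 hp.2).2
  · intro p hp q hq heq
    rw [mem_filter] at hp hq
    have h1 := (B_first hdeg htree hpr hD1 hp.1 hp.2).1
    have h2 := (B_first hdeg htree hpr hD1 hq.1 hq.2).1
    exact Prod.ext (by rw [h1, h2, heq]) heq
  · intro v hv
    simp only [Vdeep, mem_filter, mem_univ, true_and] at hv
    obtain ⟨hvc, hvD⟩ := hv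
    have hit := dep_iter hpr (u := v) D (by omega)
    by_cases hcase : G.dist c v = D
    · refine ⟨(c, v), ?_, rfl⟩
      simp only [Bset, OPf, mem_filter, mem_univ, true_and]
      refine ⟨⟨⟨Ne.symm hvc, by rw [hcase]⟩, by left; trivial⟩, ?_⟩
      rw [SimpleGraph.dist_self]
      omega
    · have hgt : D + 1 ≤ G.dist c v := by omega
      have hanc : pr^[D] v ≠ c := by
        intro h
        rw [h, SimpleGraph.dist_self] at hit
        omega
      have hL : Lg G c pr (pr^[D] v) = Lg G c pr v := Lg_iter hpr D (by omega)
      have hds := dist_same_leg hdeg htree hpr hanc hvc hL (by omega)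
      refine ⟨(pr^[D] v, v), ?_, rfl⟩
      simp only [Bset, OPf, mem_filter, mem_univ, true_and]
      refine ⟨⟨⟨?_, by omega⟩, Or.inr (Or.inr hL)⟩, by omega⟩
      intro h
      rw [h] at hit
      omega

include hD1 in
lemma B_card :
    (Bset G c pr D).card = 2 * (Vdeep G c D).card := by
  have hsplit := Finset.card_filter_add_card_filter_not
    (s := Bset G c pr D) (p := fun p => G.dist c p.1 < G.dist c p.2)
  have hswap : (Bset G c pr D).filter (fun p => ¬ G.dist c p.1 < G.dist c p.2)
      = (Bset G c pr D).filter (fun p => G.dist c p.2 < G.dist c p.1) := by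
    ext p
    simp only [mem_filter]
    constructor
    · rintro ⟨hp, hn⟩
      have := B_dep_ne hdeg htree hpr hp
      exact ⟨hp, by omega⟩
    · rintro ⟨hp, hn⟩
      exact ⟨hp, by omega⟩
  have hBsymm : ∀ p : Fin n × Fin n, p ∈ Bset G c pr D → (p.2, p.1) ∈ Bset G c pr D := by
    intro p hp
    simp only [Bset, OPf, mem_filter, mem_univ, true_and] at hp ⊢
    obtain ⟨⟨hne, hd⟩, hB⟩ := hp
    refine ⟨⟨Ne.symm hne, by rw [SimpleGraph.dist_comm]; exact hd⟩, ?_⟩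
    rcases hB with h | h | h
    · exact Or.inr (Or.inl h)
    · exact Or.inl h
    · exact Or.inr (Or.inr h.symm)
  have hgt : ((Bset G c pr D).filter (fun p => G.dist c p.2 < G.dist c p.1)).card
      = ((Bset G c pr D).filter (fun p => G.dist c p.1 < G.dist c p.2)).card := by
    apply Finset.card_bij (fun p _ => (p.2, p.1))
    · intro p hp
      rw [mem_filter] at hp ⊢
      exact ⟨hBsymm p hp.1, hp.2⟩
    · intro p hp q hq heq
      have := Prod.ext_iff.mp heq
      exact Prod.ext this.2 this.1
    · intro q hq
      rw [mem_filter] at hq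
      exact ⟨(q.2, q.1), by rw [mem_filter]; exact ⟨hBsymm q hq.1, hq.2⟩, rfl⟩
  rw [Blt_card hdeg htree hpr hD1] at hsplit
  rw [hswap, hgt, Blt_card hdeg htree hpr hD1] at hsplit
  omega

include hD1 in
lemma Vdeep_card :
    (Vdeep G c D).card = ∑ z ∈ legSet G c, Wt D (legm G c pr z) := by
  rw [Finset.card_eq_sum_card_fiberwise (f := Lg G c pr) (t := legSet G c)]
  · apply Finset.sum_congr rfl
    intro z hz
    have hfib : (Vdeep G c D).filter (fun v => Lg G c pr v = z)
        = (Leg G c pr z).filter (fun v => D ≤ G.dist c v) := by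
      ext v
      simp only [Vdeep, Leg, mem_filter, mem_univ, true_and]
      tauto
    rw [hfib]
    exact leg_deep_count hdeg htree hpr D hD1 z
  · intro v hv
    rw [Finset.mem_coe] at hv ⊢
    simp only [Vdeep, mem_filter, mem_univ, true_and] at hv
    simp only [legSet, mem_filter, mem_univ, true_and]
    exact (Lg_dep1 htree hpr hv.1).1

include hD1 in
lemma A3_card :
    (A3set G c pr D).card = ∑ x ∈ (legSet G c).offDiag, Nt D (legm G c pr x.1) (legm G c pr x.2) := by
  rw [Finset.card_eq_sum_card_fiberwise
    (f := fun p => (Lg G c pr p.1, Lg G c pr p.2)) (t := (legSet G c).offDiag)]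
  · apply Finset.sum_congr rfl
    intro x hx
    rw [Finset.mem_offDiag] at hx
    obtain ⟨hx1, hx2, hxne⟩ := hx
    rw [← icc_product_count D hD1 (legm G c pr x.1) (legm G c pr x.2)]
    apply Finset.card_bij (fun p _ => (G.dist c p.1, G.dist c p.2))
    · intro p hp
      simp only [A3set, OPf, mem_filter, mem_univ, true_and] at hp
      obtain ⟨⟨⟨hne, hd⟩, hnB⟩, hfib⟩ := hp
      push_neg at hnB
      obtain ⟨h1, h2, h3⟩ := hnB
      have hfib1 : Lg G c pr p.1 = x.1 := congrArg Prod.fst hfib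
      have hfib2 : Lg G c pr p.2 = x.2 := congrArg Prod.snd hfib
      have hp1 : p.1 ∈ Leg G c pr x.1 := by
        simp only [Leg, mem_filter, mem_univ, true_and]; exact ⟨h1, hfib1⟩
      have hp2 : p.2 ∈ Leg G c pr x.2 := by
        simp only [Leg, mem_filter, mem_univ, true_and]; exact ⟨h2, hfib2⟩
      simp only [mem_filter, mem_product]
      have hm1 : G.dist c p.1 ∈ Finset.Icc 1 (legm G c pr x.1) := by
        rw [← leg_image hdeg htree hpr x.1]
        exact Finset.mem_image_of_mem _ hp1
      have hm2 : G.dist c p.2 ∈ Finset.Icc 1 (legm G c pr x.2) := by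
        rw [← leg_image hdeg htree hpr x.2]
        exact Finset.mem_image_of_mem _ hp2
      have hcross := dist_cross htree hpr h1 h2 h3
      exact ⟨⟨hm1, hm2⟩, by omega⟩
    · intro p hp q hq heq
      simp only [A3set, OPf, mem_filter, mem_univ, true_and] at hp hq
      obtain ⟨⟨_, hnBp⟩, hfibp⟩ := hp
      obtain ⟨⟨_, hnBq⟩, hfibq⟩ := hq
      push_neg at hnBp hnBq
      have hec1 : G.dist c p.1 = G.dist c q.1 := congrArg Prod.fst heq
      have hec2 : G.dist c p.2 = G.dist c q.2 := congrArg Prod.snd heq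
      have hfp1 : Lg G c pr p.1 = x.1 := congrArg Prod.fst hfibp
      have hfp2 : Lg G c pr p.2 = x.2 := congrArg Prod.snd hfibp
      have hfq1 : Lg G c pr q.1 = x.1 := congrArg Prod.fst hfibq
      have hfq2 : Lg G c pr q.2 = x.2 := congrArg Prod.snd hfibq
      have e1 : p.1 = q.1 := by
        apply leg_inj hdeg htree hpr (G.dist c q.1) p.1 q.1 hnBp.1 hnBq.1 hec1 rfl
        rw [hfp1, hfq1]
      have e2 : p.2 = q.2 := by
        apply leg_inj hdeg htree hpr (G.dist c q.2) p.2 q.2 hnBp.2.1 hnBq.2.1 hec2 rfl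
        rw [hfp2, hfq2]
      exact Prod.ext e1 e2
    · intro q hq
      simp only [mem_filter, mem_product, mem_Icc] at hq
      obtain ⟨⟨hq1, hq2⟩, hqD⟩ := hq
      obtain ⟨u, hu, hud⟩ := exists_at_depth hdeg htree hpr (z := x.1) hq1.1 hq1.2
      obtain ⟨v, hv, hvd⟩ := exists_at_depth hdeg htree hpr (z := x.2) hq2.1 hq2.2
      simp only [Leg, mem_filter, mem_univ, true_and] at hu hv
      have hLne : Lg G c pr u ≠ Lg G c pr v := by
        rw [hu.2, hv.2]; exact hxne
      have hune : u ≠ v := by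
        intro h; rw [h] at hLne; exact hLne rfl
      have hcross := dist_cross htree hpr hu.1 hv.1 hLne
      refine ⟨(u, v), ?_, by rw [hud, hvd]⟩
      simp only [A3set, OPf, mem_filter, mem_univ, true_and]
      refine ⟨⟨⟨hune, by omega⟩, ?_⟩, by rw [hu.2, hv.2]⟩
      push_neg
      exact ⟨hu.1, hv.1, hLne⟩
  · intro p hp
    rw [Finset.mem_coe] at hp ⊢
    simp only [A3set, OPf, mem_filter, mem_univ, true_and] at hp
    obtain ⟨⟨hne, hd⟩, hnB⟩ := hp
    push_neg at hnB
    rw [Finset.mem_offDiag]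
    refine ⟨?_, ?_, ?_⟩
    · simp only [legSet, mem_filter, mem_univ, true_and]
      exact (Lg_dep1 htree hpr hnB.1).1
    · simp only [legSet, mem_filter, mem_univ, true_and]
      exact (Lg_dep1 htree hpr hnB.2.1).1
    · exact hnB.2.2


end MoreHyps

lemma pairSum_perm (D : ℕ) {l l' : List ℕ} (h : l.Perm l') :
    pairSum D l = pairSum D l' := by
  induction h with
  | nil => rfl
  | cons a h ih =>
    simp only [pairSum, ih, List.Perm.sum_eq (h.map (Nt D a))]
  | swap a b l =>
    simp only [pairSum, List.map_cons, List.sum_cons, Nt_comm D a b]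
    ring
  | trans h1 h2 ih1 ih2 => exact ih1.trans ih2

lemma offdiag_sum {m : ℕ} (D : ℕ) (s : Finset (Fin m)) (g : Fin m → ℕ) :
    ∑ x ∈ s.offDiag, Nt D (g x.1) (g x.2) = 2 * pairSum D (s.toList.map g) := by
  induction s using Finset.induction_on with
  | empty => simp [pairSum]
  | @insert a s ha ih =>
    rw [Finset.offDiag_insert (a := a) (has := ha)]
    have d1 : Disjoint (s.offDiag) ({a} ×ˢ s) := by
      rw [Finset.disjoint_left]
      intro x hx hx'
      rw [Finset.mem_offDiag] at hx
      rw [Finset.mem_product, Finset.mem_singleton] at hx'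
      exact ha (hx'.1 ▸ hx.1)
    have d2 : Disjoint (s.offDiag ∪ {a} ×ˢ s) (s ×ˢ {a}) := by
      rw [Finset.disjoint_left]
      intro x hx hx'
      rw [Finset.mem_product, Finset.mem_singleton] at hx'
      rw [Finset.mem_union] at hx
      rcases hx with h | h
      · rw [Finset.mem_offDiag] at h
        exact ha (hx'.2 ▸ h.2.1)
      · rw [Finset.mem_product] at h
        exact ha (hx'.2 ▸ h.2)
    rw [Finset.sum_union d2, Finset.sum_union d1]
    have e1 : ∑ x ∈ {a} ×ˢ s, Nt D (g x.1) (g x.2) = ∑ y ∈ s, Nt D (g a) (g y) := by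
      rw [Finset.sum_product, Finset.sum_singleton]
    have e2 : ∑ x ∈ s ×ˢ {a}, Nt D (g x.1) (g x.2) = ∑ y ∈ s, Nt D (g a) (g y) := by
      rw [Finset.sum_product]
      simp only [Finset.sum_singleton]
      exact Finset.sum_congr rfl (fun y _ => Nt_comm D (g y) (g a))
    have e3 : pairSum D ((insert a s).toList.map g) = pairSum D (g a :: s.toList.map g) := by
      apply pairSum_perm
      exact (Finset.toList_insert ha).map g
    have e4 : pairSum D (g a :: s.toList.map g)
        = ∑ y ∈ s, Nt D (g a) (g y) + pairSum D (s.toList.map g) := by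
      simp only [pairSum, List.map_map]
      rw [Finset.sum_map_toList]
      rfl
    rw [e1, e2, e3, e4, ih]
    ring

section FinalCount
variable (hdeg : ∀ w : Fin n, w ≠ c → ¬ 3 ≤ ndeg G w)
  (htree : G.IsTree) (hpr : PrSpec G c pr)
include hdeg htree hpr

lemma legm_sum (hn : 1 ≤ n) : ∑ z ∈ legSet G c, legm G c pr z = n - 1 := by
  have h1 : (univ.filter (fun v : Fin n => v ≠ c)).card = n - 1 := by
    rw [Finset.filter_ne' univ c, Finset.card_erase_of_mem (mem_univ c), Finset.card_univ,
      Fintype.card_fin]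
  rw [Finset.card_eq_sum_card_fiberwise (f := Lg G c pr) (t := legSet G c)] at h1
  · rw [← h1]
    apply Finset.sum_congr rfl
    intro z hz
    have he : (univ.filter (fun v : Fin n => v ≠ c)).filter (fun v => Lg G c pr v = z)
        = Leg G c pr z := by
      ext v
      simp only [Leg, mem_filter, mem_univ, true_and]
      try tauto
    rw [legm, ← he]
  · intro v hv
    rw [Finset.mem_coe] at hv ⊢
    simp only [mem_filter, mem_univ, true_and] at hv
    simp only [legSet, mem_filter, mem_univ, true_and]
    exact (Lg_dep1 htree hpr hv).1

lemma legm_pos {z : Fin n} (hz : z ∈ legSet G c) : 1 ≤ legm G c pr z := by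
  simp only [legSet, mem_filter, mem_univ, true_and] at hz
  have hzc : z ≠ c := by
    intro h
    rw [h, SimpleGraph.dist_self] at hz
    omega
  have : z ∈ Leg G c pr z := by
    simp only [Leg, mem_filter, mem_univ, true_and]
    exact ⟨hzc, Lg_self hz⟩
  have := Finset.card_pos.mpr ⟨z, this⟩
  exact this

lemma PF_count {D : ℕ} (hD1 : 1 ≤ D) :
    (PFf G D).card = legCount D ((legSet G c).toList.map (legm G c pr)) := by
  have h1 := OP_card_eq (G := G) (D := D)
  have h2 := OP_split (G := G) (c := c) (pr := pr) (D := D)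
  have h3 := B_card hdeg htree hpr hD1
  have h4 := A3_card hdeg htree hpr hD1
  have h5 := Vdeep_card hdeg htree hpr hD1
  have h6 := offdiag_sum D (legSet G c) (legm G c pr)
  have h7 : ∑ z ∈ legSet G c, Wt D (legm G c pr z)
      = (((legSet G c).toList.map (legm G c pr)).map (Wt D)).sum := by
    rw [List.map_map, Finset.sum_map_toList]
    rfl
  rw [legCount]
  omega

end FinalCount


lemma edist_eq_iff (htree : G.IsTree) {u v : Fin n} {D : ℕ} :
    G.edist u v = (D : ℕ∞) ↔ G.dist u v = D := by
  have hne : G.edist u v ≠ ⊤ := by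
    rw [SimpleGraph.edist_ne_top_iff_reachable]
    exact htree.isConnected u v
  have hd : G.dist u v = (G.edist u v).toNat := rfl
  constructor
  · intro h
    rw [hd, h, ENat.toNat_coe]
  · intro h
    rw [hd] at h
    rw [← ENat.coe_toNat hne, h]


end Graph
end SpiderAux

open SpiderAux Finset in
/-- A spider with `n ≥ 2ℓ+1` vertices contains at most `ℓ+3` paths with exactly `n-ℓ`
vertices, except for the spider `S_{1,1,1,1} = K_{1,4}` when `ℓ = 2`.  (In a tree,
paths with `m` vertices correspond bijectively to unordered pairs of vertices at
distance `m-1`.) -/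
theorem spider_long_paths (n ℓ : ℕ) (hℓ : 1 ≤ ℓ) (hn : 2 * ℓ + 1 ≤ n)
    (G : SimpleGraph (Fin n)) (htree : G.IsTree)
    (hspider : ∀ u v : Fin n, 3 ≤ ndeg G u → 3 ≤ ndeg G v → u = v)
    (hexc : ¬ (ℓ = 2 ∧ Nonempty (G ≃g completeBipartiteGraph (Fin 1) (Fin 4)))) :
    Nat.card {p : Fin n × Fin n //
      p.1 < p.2 ∧ G.edist p.1 p.2 = ((n - ℓ - 1 : ℕ) : ℕ∞)} ≤ ℓ + 3 := by
  classical
  set D := n - ℓ - 1 with hDdef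
  have hD1 : 1 ≤ D := by omega
  have hDl : ℓ ≤ D := by omega
  have hcenter : ∃ c : Fin n, ∀ w : Fin n, w ≠ c → ¬ 3 ≤ ndeg G w := by
    by_cases hex : ∃ v, 3 ≤ ndeg G v
    · obtain ⟨v, hv⟩ := hex
      exact ⟨v, fun w hw h3 => hw (hspider w v h3 hv)⟩
    · push_neg at hex
      exact ⟨⟨0, by omega⟩, fun w _ h3 => by have := hex w; omega⟩
  obtain ⟨c, hdeg⟩ := hcenter
  obtain ⟨pr, hpr⟩ := prspec_exists htree c
  have hsub : Nat.card {p : Fin n × Fin n //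
      p.1 < p.2 ∧ G.edist p.1 p.2 = ((D : ℕ) : ℕ∞)} = (PFf G D).card := by
    rw [Nat.card_eq_fintype_card, Fintype.card_subtype]
    congr 1
    ext p
    simp only [PFf, mem_filter, mem_univ, true_and]
    rw [edist_eq_iff htree]
  rw [hsub, PF_count hdeg htree hpr hD1]
  set l0 := (legSet G c).toList.map (legm G c pr) with hl0
  set ls := List.insertionSort (· ≥ ·) l0 with hls
  have hperm : ls.Perm l0 := List.perm_insertionSort _ _
  have hsorted : ls.Pairwise (· ≥ ·) := List.pairwise_insertionSort _ _
  have hsum0 : l0.sum = n - 1 := by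
    rw [hl0, Finset.sum_map_toList]
    exact legm_sum hdeg htree hpr (by omega)
  have hsum : ls.sum = D + ℓ := by rw [hperm.sum_eq, hsum0]; omega
  have hpos : ∀ x ∈ ls, 1 ≤ x := by
    intro x hx
    rw [hperm.mem_iff, hl0, List.mem_map] at hx
    obtain ⟨z, hz, rfl⟩ := hx
    exact legm_pos hdeg htree hpr (Finset.mem_toList.mp hz)
  have hlceq : legCount D l0 = legCount D ls := by
    rw [legCount, legCount, pairSum_perm D hperm]
    congr 1
    exact (List.Perm.sum_eq (hperm.map (Wt D))).symm
  rw [hlceq]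
  apply legCount_le D ℓ hℓ hDl ls hpos hsorted hsum
  rintro ⟨hl2, hls4⟩
  apply hexc
  refine ⟨hl2, ?_⟩
  have hn5 : n = 5 := by
    have h4 : ls.sum = 4 := by rw [hls4]; rfl
    omega
  -- every leg has one vertex
  have hall1 : ∀ z ∈ legSet G c, legm G c pr z = 1 := by
    intro z hz
    have hmem : legm G c pr z ∈ ls := by
      rw [hperm.mem_iff, hl0, List.mem_map]
      exact ⟨z, Finset.mem_toList.mpr hz, rfl⟩
    rw [hls4] at hmem
    simp only [List.mem_cons, List.not_mem_nil, or_false] at hmem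
    omega
  have hdep1 : ∀ v : Fin n, v ≠ c → G.dist c v = 1 := by
    intro v hv
    have hz : Lg G c pr v ∈ legSet G c := by
      simp only [legSet, mem_filter, mem_univ, true_and]
      exact (Lg_dep1 htree hpr hv).1
    have hvleg : v ∈ Leg G c pr (Lg G c pr v) := by
      rw [Leg, mem_filter]
      exact ⟨mem_univ _, hv, rfl⟩
    have hzleg : Lg G c pr v ∈ Leg G c pr (Lg G c pr v) := by
      simp only [Leg, mem_filter, mem_univ, true_and]
      refine ⟨?_, ?_⟩
      · intro h
        have := (Lg_dep1 htree hpr hv).1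
        rw [h, SimpleGraph.dist_self] at this
        omega
      · exact Lg_self (Lg_dep1 htree hpr hv).1
    have hcard1 : (Leg G c pr (Lg G c pr v)).card = 1 := hall1 _ hz
    rw [Finset.card_eq_one] at hcard1
    obtain ⟨a, ha⟩ := hcard1
    rw [ha, Finset.mem_singleton] at hvleg hzleg
    rw [hvleg, ← hzleg]
    exact (Lg_dep1 htree hpr hv).1
  have hAdj : ∀ u v : Fin n, G.Adj u v ↔ ((u = c ∧ ¬ v = c) ∨ (¬ u = c ∧ v = c)) := by
    intro u v
    constructor
    · intro hadj
      by_cases hu : u = c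
      · refine Or.inl ⟨hu, ?_⟩
        intro hv
        rw [hu, hv] at hadj
        exact G.irrefl hadj
      · by_cases hv : v = c
        · exact Or.inr ⟨hu, hv⟩
        · exfalso
          have h1 := hdep1 u hu
          have h2 := hdep1 v hv
          exact adj_dep_ne htree hpr hadj (by omega)
    · rintro (⟨hu, hv⟩ | ⟨hu, hv⟩)
      · have h1 := hdep1 v hv
        rw [hu]
        exact SimpleGraph.dist_eq_one_iff_adj.mp h1
      · have h1 := hdep1 u hu
        rw [hv]
        exact (SimpleGraph.dist_eq_one_iff_adj.mp h1).symm
  -- build the iso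
  have hc0 : Fintype.card {v : Fin n // v = c} = 1 := Fintype.card_subtype_eq c
  have hc1 : Fintype.card {v : Fin n // ¬ v = c} = 4 := by
    rw [Fintype.card_subtype_compl, Fintype.card_subtype_eq, Fintype.card_fin]
    omega
  let e0 : {v : Fin n // v = c} ≃ Fin 1 := Fintype.equivFinOfCardEq hc0
  let e1 : {v : Fin n // ¬ v = c} ≃ Fin 4 := Fintype.equivFinOfCardEq hc1
  let e : Fin n ≃ (Fin 1 ⊕ Fin 4) :=
    (Equiv.sumCompl (· = c)).symm.trans (Equiv.sumCongr e0 e1)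
  refine ⟨⟨e, ?_⟩⟩
  intro u v
  show (completeBipartiteGraph (Fin 1) (Fin 4)).Adj (e u) (e v) ↔ G.Adj u v
  simp only [e, Equiv.trans_apply, Equiv.sumCongr_apply]
  by_cases hu : u = c <;> by_cases hv : v = c
  · rw [Equiv.sumCompl_symm_apply_of_pos (p := fun x => x = c) hu, Equiv.sumCompl_symm_apply_of_pos (p := fun x => x = c) hv]
    rw [hAdj u v]
    simp [completeBipartiteGraph, hu, hv]
  · rw [Equiv.sumCompl_symm_apply_of_pos (p := fun x => x = c) hu, Equiv.sumCompl_symm_apply_of_neg (p := fun x => x = c) hv]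
    rw [hAdj u v]
    simp [completeBipartiteGraph, hu, hv]
  · rw [Equiv.sumCompl_symm_apply_of_neg (p := fun x => x = c) hu, Equiv.sumCompl_symm_apply_of_pos (p := fun x => x = c) hv]
    rw [hAdj u v]
    simp [completeBipartiteGraph, hu, hv]
  · rw [Equiv.sumCompl_symm_apply_of_neg (p := fun x => x = c) hu, Equiv.sumCompl_symm_apply_of_neg (p := fun x => x = c) hv]
    rw [hAdj u v]
    simp [completeBipartiteGraph, hu, hv]
end

section
/- Let ℓ ≥ 3 and n = 2ℓ+1. Suppose F is an acyclic n-vertex simple graph, H is an n-vertex simple graph containing a cycle, and F and H have the same (n−ℓ)-deck. Then F has a vertex of degree at least 3, and H has a vertex of degree at least 3. -/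
open SimpleGraph

section Helpers

variable {V : Type*} {G : SimpleGraph V}

private lemma three_le_ndeg [Finite V] {v a b c : V} (ha : G.Adj v a) (hb : G.Adj v b)
    (hc : G.Adj v c) (hab : a ≠ b) (hac : a ≠ c) (hbc : b ≠ c) : 3 ≤ ndeg G v := by
  classical
  haveI : Fintype V := Fintype.ofFinite V
  rw [ndeg, Nat.card_eq_fintype_card]
  have hss : ({⟨a, ha⟩, ⟨b, hb⟩, ⟨c, hc⟩} : Finset {w : V // G.Adj v w}).card = 3 := by
    rw [Finset.card_insert_of_notMem (by simp [Subtype.ext_iff, hab, hac]),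
      Finset.card_insert_of_notMem (by simp [Subtype.ext_iff, hbc]), Finset.card_singleton]
  calc (3 : ℕ) = _ := hss.symm
    _ ≤ _ := Finset.card_le_univ _

private lemma eq_of_ndeg_le_two [Finite V] {v a b c : V} (hdeg : ndeg G v ≤ 2) (ha : G.Adj v a)
    (hb : G.Adj v b) (hc : G.Adj v c) : a = b ∨ a = c ∨ b = c := by
  by_contra hcon
  push_neg at hcon
  have := le_trans (three_le_ndeg ha hb hc hcon.1 hcon.2.1 hcon.2.2) hdeg
  omega

private lemma exists_three_nbrs [Finite V] {v : V} (h : 3 ≤ ndeg G v) :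
    ∃ a b c, G.Adj v a ∧ G.Adj v b ∧ G.Adj v c ∧ a ≠ b ∧ a ≠ c ∧ b ≠ c := by
  classical
  haveI : Fintype V := Fintype.ofFinite V
  rw [ndeg, Nat.card_eq_fintype_card] at h
  obtain ⟨t, -, htc⟩ := Finset.exists_subset_card_eq (s := (Finset.univ : Finset {w // G.Adj v w}))
    (by simpa using h)
  obtain ⟨a, b, c, hab, hac, hbc, -⟩ := Finset.card_eq_three.mp htc
  exact ⟨a.1, b.1, c.1, a.2, b.2, c.2, fun h => hab (Subtype.ext h),
    fun h => hac (Subtype.ext h), fun h => hbc (Subtype.ext h)⟩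

private lemma support_eq_map_getVert : ∀ {u v : V} (p : G.Walk u v),
    p.support = (List.range (p.length + 1)).map p.getVert
  | _, _, Walk.nil => by
      simp [Walk.support_nil, Walk.length_nil, List.range_succ]
  | _, _, Walk.cons h q => by
      rw [Walk.support_cons, support_eq_map_getVert q, Walk.length_cons]
      conv_rhs => rw [List.range_succ_eq_map]
      simp only [List.map_cons, List.map_map]
      rfl

private lemma getVert_inj_of_isPath {u v : V} {p : G.Walk u v} (hp : p.IsPath) {i j : ℕ}
    (hi : i ≤ p.length) (hj : j ≤ p.length) (h : p.getVert i = p.getVert j) : i = j := by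
  have hn := hp.support_nodup
  rw [support_eq_map_getVert] at hn
  exact List.inj_on_of_nodup_map hn (List.mem_range.mpr (by omega))
    (List.mem_range.mpr (by omega)) h

private lemma tail_support_eq_map_getVert {u : V} (p : G.Walk u u) :
    p.support.tail = (List.range p.length).map (fun i => p.getVert (i + 1)) := by
  rw [support_eq_map_getVert, List.range_succ_eq_map, List.map_cons, List.tail_cons,
    List.map_map]
  rfl

private lemma getVert_inj_of_isCycle {u : V} {p : G.Walk u u} (hp : p.IsCycle) {i j : ℕ}
    (hi : i < p.length) (hj : j < p.length) (h : p.getVert i = p.getVert j) : i = j := by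
  have hn := hp.support_nodup
  rw [tail_support_eq_map_getVert] at hn
  have key : ∀ {a b : ℕ}, a < p.length → b < p.length →
      p.getVert (a + 1) = p.getVert (b + 1) → a = b := fun ha hb hab =>
    List.inj_on_of_nodup_map hn (List.mem_range.mpr ha) (List.mem_range.mpr hb) hab
  have hL : 3 ≤ p.length := hp.three_le_length
  rcases Nat.eq_zero_or_pos i with hi0 | hip
  · rcases Nat.eq_zero_or_pos j with hj0 | hjp
    · omega
    · subst hi0
      have h0 : p.getVert ((p.length - 1) + 1) = p.getVert ((j - 1) + 1) := by
        have : p.getVert p.length = p.getVert 0 := by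
          rw [Walk.getVert_length, Walk.getVert_zero]
        rw [show p.length - 1 + 1 = p.length by omega, this,
          show j - 1 + 1 = j by omega]
        exact h
      have := key (by omega) (by omega) h0
      omega
  · rcases Nat.eq_zero_or_pos j with hj0 | hjp
    · subst hj0
      have h0 : p.getVert ((i - 1) + 1) = p.getVert ((p.length - 1) + 1) := by
        have : p.getVert p.length = p.getVert 0 := by
          rw [Walk.getVert_length, Walk.getVert_zero]
        rw [show p.length - 1 + 1 = p.length by omega, this,
          show i - 1 + 1 = i by omega]
        exact h
      have := key (by omega) (by omega) h0
      omega
    · have := key (a := i - 1) (b := j - 1) (by omega) (by omega)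
        (by rw [show i - 1 + 1 = i by omega, show j - 1 + 1 = j by omega]; exact h)
      omega

private lemma getVert_mem_support {u v : V} (p : G.Walk u v) {i : ℕ} (hi : i ≤ p.length) :
    p.getVert i ∈ p.support :=
  Walk.mem_support_iff_exists_getVert.mpr ⟨i, rfl, hi⟩

private lemma exists_boundary {S : Set V} :
    ∀ {u v : V} (_ : G.Walk u v), u ∉ S → v ∈ S →
      ∃ a b, G.Adj a b ∧ a ∉ S ∧ b ∈ S := by
  intro u v q
  induction q with
  | nil => intro h1 h2; exact absurd h2 h1
  | @cons a b c h q ih =>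
    intro h1 h2
    by_cases hb : b ∈ S
    · exact ⟨a, b, h, h1, hb⟩
    · exact ih hb h2

private def induceWalk {s : Set V} : ∀ {u v : V} (w : G.Walk u v)
    (h : ∀ x ∈ w.support, x ∈ s),
    (G.induce s).Walk ⟨u, h u w.start_mem_support⟩ ⟨v, h v w.end_mem_support⟩
  | _, _, Walk.nil, _ => Walk.nil
  | _, _, Walk.cons hadj q, h =>
      Walk.cons (by simpa using hadj)
        (induceWalk q (fun x hx => h x (by simp [hx])))

private lemma induceWalk_map {s : Set V} : ∀ {u v : V} (w : G.Walk u v)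
    (h : ∀ x ∈ w.support, x ∈ s),
    (induceWalk w h).map (SimpleGraph.Embedding.induce s).toHom = w
  | _, _, Walk.nil, _ => rfl
  | _, _, Walk.cons hadj q, h => by
      simp only [induceWalk, Walk.map_cons, induceWalk_map q]
      rfl

private lemma isAcyclic_of_embedding {W : Type*} {G' : SimpleGraph W}
    (f : G ↪g G') (h : G'.IsAcyclic) : G.IsAcyclic := by
  intro v c hc
  exact h (c.map f.toHom) (hc.map f.injective)

private lemma reachable_induce_mono {s t : Set V} (hst : s ⊆ t) (a b : s)
    (h : (G.induce s).Reachable a b) :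
    (G.induce t).Reachable ⟨a.1, hst a.2⟩ ⟨b.1, hst b.2⟩ := by
  exact h.map ((⟨fun x => ⟨x.1, hst x.2⟩, fun {x y} hxy => by simpa using hxy⟩ :
    G.induce s →g G.induce t))

private lemma exists_hamiltonian_path {W : Type*} [Fintype W] [Nonempty W]
    {G : SimpleGraph W} (hconn : G.Connected) (hac : G.IsAcyclic)
    (hdeg : ∀ v a b c : W, G.Adj v a → G.Adj v b → G.Adj v c → a = b ∨ a = c ∨ b = c) :
    ∃ (x y : W) (p : G.Walk x y), p.IsPath ∧ ∀ w, w ∈ p.support := by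
  classical
  set P : ℕ → Prop := fun N => ∃ (x y : W) (p : G.Walk x y), p.IsPath ∧ p.length = N with hP
  have hP0 : P 0 := ⟨Classical.arbitrary W, Classical.arbitrary W, Walk.nil, by simp, rfl⟩
  set L := Nat.findGreatest P (Fintype.card W) with hL
  have hPL : P L := Nat.findGreatest_spec (Nat.zero_le _) hP0
  obtain ⟨x, y, p, hp, hlen⟩ := hPL
  have hmax : ∀ (x' y' : W) (q : G.Walk x' y'), q.IsPath → q.length ≤ L := by
    intro x' y' q hq
    by_contra hlt
    push_neg at hlt
    exact Nat.findGreatest_is_greatest hlt (le_of_lt hq.length_lt) ⟨x', y', q, hq, rfl⟩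
  refine ⟨x, y, p, hp, ?_⟩
  by_contra hw
  push_neg at hw
  obtain ⟨w0, hw0⟩ := hw
  obtain ⟨q⟩ : G.Reachable w0 x := hconn.preconnected w0 x
  obtain ⟨a, b, hadj, haS, hbS⟩ :=
    exists_boundary (S := {z | z ∈ p.support}) q hw0 p.start_mem_support
  obtain ⟨i, hgi, hiL⟩ := Walk.mem_support_iff_exists_getVert.mp hbS
  rw [hlen] at hiL
  rcases Nat.eq_zero_or_pos i with hi0 | hip
  · -- b = x : extend at the front
    have hbx : b = x := by rw [← hgi, hi0, Walk.getVert_zero]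
    have hpath : (p.cons (hbx ▸ hadj)).IsPath := by
      rw [Walk.cons_isPath_iff]
      exact ⟨hp, haS⟩
    have := hmax _ _ _ hpath
    simp [Walk.length_cons, hlen] at this
  · rcases eq_or_lt_of_le hiL with hiL' | hiL'
    · -- b = y : extend at the back
      have hby : b = y := by rw [← hgi, hiL', ← hlen, Walk.getVert_length]
      have haS' : a ∉ p.reverse.support := by
        rwa [Walk.support_reverse, List.mem_reverse]
      have hpath : (p.reverse.cons (hby ▸ hadj)).IsPath := by
        rw [Walk.cons_isPath_iff]
        exact ⟨hp.reverse, haS'⟩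
      have := hmax _ _ _ hpath
      simp [Walk.length_cons, Walk.length_reverse, hlen] at this
    · -- interior: degree 3
      have h1 : G.Adj b (p.getVert (i + 1)) := by
        rw [← hgi]
        exact p.adj_getVert_succ (by omega)
      have h2 : G.Adj b (p.getVert (i - 1)) := by
        rw [← hgi]
        have := p.adj_getVert_succ (i := i - 1) (by omega)
        rw [show i - 1 + 1 = i by omega] at this
        exact this.symm
      rcases hdeg b a (p.getVert (i + 1)) (p.getVert (i - 1)) hadj.symm h1 h2 with
        h' | h' | h'
      · exact haS (h' ▸ getVert_mem_support p (by omega))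
      · exact haS (h' ▸ getVert_mem_support p (by omega))
      · have := getVert_inj_of_isPath hp (by omega) (by omega) h'
        omega

end Helpers


/-- For `ℓ ≥ 3` and `n = 2ℓ+1`, if `F` is acyclic, `H` contains a cycle, and they have
the same `(n-ℓ)`-deck, then both `F` and `H` have a vertex of degree at least `3`. -/
theorem max_degree_at_least_three (ℓ n : ℕ) (hℓ : 3 ≤ ℓ) (hn : n = 2 * ℓ + 1)
    (F H : SimpleGraph (Fin n)) (hF : F.IsAcyclic) (hH : ¬ H.IsAcyclic)
    (hdeck : SameDeck F H (n - ℓ)) :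
    (∃ v : Fin n, 3 ≤ ndeg F v) ∧ (∃ v : Fin n, 3 ≤ ndeg H v) := by
  classical
  have hk : n - ℓ = ℓ + 1 := by omega
  rw [hk] at hdeck
  obtain ⟨φ, hφ⟩ := hdeck
  have hkn : ℓ + 1 ≤ n := by omega
  -- every card of F is acyclic
  have hFcard : ∀ s : {s : Finset (Fin n) // s.card = ℓ + 1},
      (SimpleGraph.induce (↑s.1 : Set (Fin n)) F).IsAcyclic :=
    fun s => isAcyclic_of_embedding (SimpleGraph.Embedding.induce _) hF
  -- every card of H is acyclic
  have hHcard : ∀ t : {s : Finset (Fin n) // s.card = ℓ + 1},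
      (SimpleGraph.induce (↑t.1 : Set (Fin n)) H).IsAcyclic := by
    intro t
    obtain ⟨e⟩ := hφ (φ.symm t)
    rw [Equiv.apply_symm_apply] at e
    exact isAcyclic_of_embedding e.symm.toEmbedding (hFcard _)
  -- the cycle in H
  rw [SimpleGraph.IsAcyclic] at hH
  push_neg at hH
  obtain ⟨v0, c, hc⟩ := hH
  set m : ℕ := c.length with hmdef
  have hm3 : 3 ≤ m := hc.three_le_length
  -- end vertex is in the tail of the support
  have hv0tail : v0 ∈ c.support.tail := by
    rw [tail_support_eq_map_getVert]
    refine List.mem_map.mpr ⟨m - 1, List.mem_range.mpr (by omega), ?_⟩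
    rw [show m - 1 + 1 = m by omega, hmdef]
    exact c.getVert_length
  -- the length of the cycle is at least ℓ + 2
  have hmge : ℓ + 2 ≤ m := by
    by_contra hlt
    push_neg at hlt
    have hsub : c.support.toFinset ⊆ c.support.tail.toFinset := by
      intro x hx
      rw [List.mem_toFinset] at hx ⊢
      rw [Walk.support_eq_cons] at hx
      rcases List.mem_cons.mp hx with hx1 | hx1
      · exact hx1 ▸ hv0tail
      · exact hx1
    have hcard : c.support.toFinset.card ≤ ℓ + 1 := by
      have h1 : c.support.toFinset.card ≤ c.support.tail.toFinset.card :=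
        Finset.card_le_card hsub
      have h2 : c.support.tail.toFinset.card ≤ c.support.tail.length :=
        c.support.tail.toFinset_card_le
      have h3 : c.support.length = m + 1 := by rw [hmdef]; exact c.length_support
      have h4 : c.support.tail.length = c.support.length - 1 := List.length_tail
      omega
    obtain ⟨s, hs_sub, hs_card⟩ := Finset.exists_superset_card_eq hcard (by simp; omega)
    have hmem : ∀ x ∈ c.support, x ∈ (↑s : Set (Fin n)) := by
      intro x hx
      exact hs_sub (List.mem_toFinset.mpr hx)
    have hlift : (induceWalk c hmem).IsCycle := by
      have hinj : Function.Injective (SimpleGraph.Embedding.induce (↑s : Set (Fin n))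
          (G := H)).toHom := Subtype.val_injective
      refine (Walk.map_isCycle_iff_of_injective hinj).mp ?_
      rw [induceWalk_map]
      exact hc
    exact hHcard ⟨s, hs_card⟩ _ hlift
  -- connected card collections
  set CF : Finset {s : Finset (Fin n) // s.card = ℓ + 1} :=
    Finset.univ.filter (fun s => (SimpleGraph.induce (↑s.1 : Set (Fin n)) F).Connected) with hCF
  set CH : Finset {s : Finset (Fin n) // s.card = ℓ + 1} :=
    Finset.univ.filter (fun s => (SimpleGraph.induce (↑s.1 : Set (Fin n)) H).Connected) with hCH
  have hcards : CF.card = CH.card := by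
    refine Finset.card_bij (fun s _ => φ s) ?_ ?_ ?_
    · intro s hs
      rw [hCF, Finset.mem_filter] at hs
      show φ s ∈ CH
      rw [hCH, Finset.mem_filter]
      obtain ⟨e⟩ := hφ s
      exact ⟨Finset.mem_univ _, (Iso.connected_iff e).mp hs.2⟩
    · intro a _ b _ hab
      exact φ.injective hab
    · intro t ht
      rw [hCH, Finset.mem_filter] at ht
      refine ⟨φ.symm t, ?_, by simp⟩
      rw [hCF, Finset.mem_filter]
      obtain ⟨e⟩ := hφ (φ.symm t)
      rw [Equiv.apply_symm_apply] at e
      exact ⟨Finset.mem_univ _, (Iso.connected_iff e).mpr ht.2⟩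
  -- lower bound on connected cards of H via arcs of the cycle
  have hCHlb : ℓ + 2 ≤ CH.card := by
    set g : ℕ → Fin n := fun j => c.getVert (j % m) with hg
    have hmpos : 0 < m := by omega
    have hgmod : ∀ a b : ℕ, a % m = b % m → g a = g b := by
      intro a b hab
      rw [hg]
      simp only
      rw [hab]
    have hginj : ∀ a b : ℕ, g a = g b → a % m = b % m := by
      intro a b hab
      exact getVert_inj_of_isCycle hc (by rw [← hmdef]; exact Nat.mod_lt _ hmpos)
        (by rw [← hmdef]; exact Nat.mod_lt _ hmpos) hab
    have hgadj : ∀ j : ℕ, H.Adj (g j) (g (j + 1)) := by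
      intro j
      have h1 : j % m < m := Nat.mod_lt _ hmpos
      have h1' : 1 % m = 1 := Nat.mod_eq_of_lt (by omega)
      rcases Nat.lt_or_ge (j % m + 1) m with hj | hj
      · have h2 : (j + 1) % m = j % m + 1 := by
          rw [Nat.add_mod, h1', Nat.mod_eq_of_lt hj]
        have hadj := c.adj_getVert_succ (i := j % m) (by rw [← hmdef]; omega)
        rw [hg]
        simp only
        rw [h2]
        exact hadj
      · have hj' : j % m = m - 1 := by omega
        have h2 : (j + 1) % m = 0 := by
          rw [Nat.add_mod, h1', hj', show m - 1 + 1 = m by omega, Nat.mod_self]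
        have hadj := c.adj_getVert_succ (i := m - 1) (by rw [← hmdef]; omega)
        rw [show m - 1 + 1 = m by omega, hmdef, c.getVert_length] at hadj
        rw [hg]
        simp only
        rw [h2, hj', c.getVert_zero]
        exact hadj
    set A : ℕ → Finset (Fin n) := fun i => (Finset.range (ℓ + 1)).image (fun t => g (i + t))
      with hA
    have hginj' : ∀ i t t' : ℕ, t ≤ ℓ → t' ≤ ℓ → g (i + t) = g (i + t') → t = t' := by
      intro i t t' ht ht' h
      have h1 : (i + t) % m = (i + t') % m := hginj _ _ h
      have h2 : t % m = t' % m := Nat.ModEq.add_left_cancel' i h1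
      rwa [Nat.mod_eq_of_lt (by omega), Nat.mod_eq_of_lt (by omega)] at h2
    have hAmem : ∀ i t : ℕ, t ≤ ℓ → g (i + t) ∈ A i := by
      intro i t ht
      rw [hA]
      exact Finset.mem_image.mpr ⟨t, Finset.mem_range.mpr (by omega), rfl⟩
    have hAmem0 : ∀ i : ℕ, g i ∈ A i := by
      intro i
      have := hAmem i 0 (by omega)
      rwa [Nat.add_zero] at this
    have hAcard : ∀ i, (A i).card = ℓ + 1 := by
      intro i
      rw [hA]
      simp only
      rw [Finset.card_image_of_injOn, Finset.card_range]
      intro t ht t' ht' h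
      exact hginj' i t t' (by simp at ht; omega) (by simp at ht'; omega) h
    have hAconn : ∀ i, (SimpleGraph.induce (↑(A i) : Set (Fin n)) H).Connected := by
      intro i
      have key : ∀ t : ℕ, (ht : t ≤ ℓ) → (SimpleGraph.induce (↑(A i) : Set (Fin n)) H).Reachable
          ⟨g i, by simpa using hAmem0 i⟩ ⟨g (i + t), by simpa using hAmem i t ht⟩ := by
        intro t ht
        induction t with
        | zero => exact SimpleGraph.Reachable.refl _
        | succ t ih =>
          refine (ih (by omega)).trans (SimpleGraph.Adj.reachable ?_)
          simpa [Nat.add_assoc] using hgadj (i + t)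
      haveI : Nonempty (↑(A i) : Set (Fin n)) := ⟨⟨g i, by simpa using hAmem0 i⟩⟩
      refine ⟨?_⟩
      intro x y
      obtain ⟨t, ht, hgt⟩ := Finset.mem_image.mp (by exact_mod_cast x.2 : ↑x ∈ A i)
      obtain ⟨t', ht', hgt'⟩ := Finset.mem_image.mp (by exact_mod_cast y.2 : ↑y ∈ A i)
      rw [Finset.mem_range] at ht ht'
      have hx : x = ⟨g (i + t), by simpa using hAmem i t (by omega)⟩ := Subtype.ext hgt.symm
      have hy : y = ⟨g (i + t'), by simpa using hAmem i t' (by omega)⟩ := Subtype.ext hgt'.symm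
      rw [hx, hy]
      exact (key t (by omega)).symm.trans (key t' (by omega))
    have hAnotmem : ∀ i : ℕ, g (i + (m - 1)) ∉ A i := by
      intro i hmem
      obtain ⟨t, ht, hgt⟩ := Finset.mem_image.mp hmem
      rw [Finset.mem_range] at ht
      have h1 : (i + t) % m = (i + (m - 1)) % m := hginj _ _ hgt
      have h2 : t % m = (m - 1) % m := Nat.ModEq.add_left_cancel' i h1
      rw [Nat.mod_eq_of_lt (by omega), Nat.mod_eq_of_lt (by omega)] at h2
      omega
    have hAinj : ∀ i j : ℕ, i < ℓ + 2 → j < ℓ + 2 → A i = A j → i = j := by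
      intro i j hi hj hij
      have hgi : g i ∈ A j := by rw [← hij]; exact hAmem0 i
      obtain ⟨t, ht, hgt⟩ := Finset.mem_image.mp hgi
      rw [Finset.mem_range] at ht
      rcases Nat.eq_zero_or_pos t with ht0 | htp
      · subst ht0
        rw [Nat.add_zero] at hgt
        have h1 : j % m = i % m := hginj _ _ hgt
        rw [Nat.mod_eq_of_lt (by omega), Nat.mod_eq_of_lt (by omega)] at h1
        omega
      · exfalso
        have h1 : (j + t) % m = i % m := hginj _ _ hgt
        have e1 : (i + (m - 1)) % m = (j + (t - 1)) % m := by
          have e2 : ((j + t) + (m - 1)) % m = (i + (m - 1)) % m :=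
            Nat.ModEq.add_right _ h1
          have e3 : (j + t) + (m - 1) = (j + (t - 1)) + m := by omega
          rw [e3, Nat.add_mod_right] at e2
          exact e2.symm
        have : g (i + (m - 1)) ∈ A i := by
          rw [hij]
          rw [hgmod _ _ e1]
          exact hAmem j (t - 1) (by omega)
        exact hAnotmem i this
    have hfinal : (Finset.range (ℓ + 2)).card ≤ CH.card := by
      apply Finset.card_le_card_of_injOn
        (fun i => (⟨A i, hAcard i⟩ : {s : Finset (Fin n) // s.card = ℓ + 1}))
      · intro i hi
        simp only [Finset.mem_coe, hCH, Finset.mem_filter]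
        exact ⟨Finset.mem_univ _, hAconn i⟩
      · intro i hi j hj hij
        rw [Finset.mem_coe, Finset.mem_range] at hi hj
        exact hAinj i j hi hj (congrArg Subtype.val hij)
    simpa using hfinal
  have hCFlb : ℓ + 2 ≤ CF.card := by rw [hcards]; exact hCHlb
  -- upper bound: F has a vertex of degree ≥ 3
  have hF3 : ∃ v : Fin n, 3 ≤ ndeg F v := by
    by_contra hdF
    push_neg at hdF
    have hdF' : ∀ v, ndeg F v ≤ 2 := fun v => by have := hdF v; omega
    have hCFne : CF.Nonempty := Finset.card_pos.mp (by omega)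
    obtain ⟨s0, hs0⟩ := hCFne
    set U : Set (Fin n) := {x | ∃ s ∈ CF, x ∈ s.1} with hU
    have hsubU : ∀ s ∈ CF, (↑s.1 : Set (Fin n)) ⊆ U := by
      intro s hs x hx
      exact ⟨s, hs, hx⟩
    have hmemconn : ∀ s ∈ CF, (SimpleGraph.induce (↑s.1 : Set (Fin n)) F).Connected := by
      intro s hs
      rw [hCF, Finset.mem_filter] at hs
      exact hs.2
    have hintersect : ∀ s ∈ CF, ∀ t ∈ CF, ∃ x, x ∈ s.1 ∧ x ∈ t.1 := by
      intro s _ t _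
      have h1 := Finset.card_union_add_card_inter s.1 t.1
      have h2 := Finset.card_le_univ (s.1 ∪ t.1)
      rw [Fintype.card_fin] at h2
      have h3 : 0 < (s.1 ∩ t.1).card := by
        have := s.2
        have := t.2
        omega
      obtain ⟨x, hx⟩ := Finset.card_pos.mp h3
      rw [Finset.mem_inter] at hx
      exact ⟨x, hx.1, hx.2⟩
    haveI hUne : Nonempty U := by
      have h0 : 0 < s0.1.card := by rw [s0.2]; omega
      obtain ⟨x, hx⟩ := Finset.card_pos.mp h0
      exact ⟨⟨x, hsubU s0 hs0 hx⟩⟩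
    have hreach : ∀ s (hs : s ∈ CF), ∀ x (hx : x ∈ s.1), ∃ z, ∃ hz : z ∈ s0.1,
        (SimpleGraph.induce U F).Reachable ⟨x, hsubU s hs hx⟩
          ⟨z, hsubU s0 hs0 (Finset.mem_coe.mpr hz)⟩ := by
      intro s hs x hx
      obtain ⟨z, hzs, hzs0⟩ := hintersect s hs s0 hs0
      have hr := (hmemconn s hs).preconnected ⟨x, Finset.mem_coe.mpr hx⟩
        ⟨z, Finset.mem_coe.mpr hzs⟩
      have := reachable_induce_mono (hsubU s hs) _ _ hr
      exact ⟨z, hzs0, this⟩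
    have hUconn : (SimpleGraph.induce U F).Connected := by
      refine ⟨?_⟩
      intro x y
      obtain ⟨s, hs, hx⟩ := x.2
      obtain ⟨t, ht, hy⟩ := y.2
      obtain ⟨z, hz, hrx⟩ := hreach s hs x.1 hx
      obtain ⟨z', hz', hry⟩ := hreach t ht y.1 hy
      have hzz := (hmemconn s0 hs0).preconnected ⟨z, Finset.mem_coe.mpr hz⟩
        ⟨z', Finset.mem_coe.mpr hz'⟩
      have hzz' := reachable_induce_mono (hsubU s0 hs0) _ _ hzz
      have hx' : x = ⟨x.1, hsubU s hs hx⟩ := Subtype.ext rfl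
      have hy' : y = ⟨y.1, hsubU t ht hy⟩ := Subtype.ext rfl
      rw [hx', hy']
      exact (hrx.trans hzz').trans hry.symm
    have hUac : (SimpleGraph.induce U F).IsAcyclic :=
      isAcyclic_of_embedding (SimpleGraph.Embedding.induce U) hF
    have hUdeg : ∀ v a b c : U, (SimpleGraph.induce U F).Adj v a →
        (SimpleGraph.induce U F).Adj v b → (SimpleGraph.induce U F).Adj v c →
        a = b ∨ a = c ∨ b = c := by
      intro v a b c hva hvb hvc
      rcases eq_of_ndeg_le_two (hdF' ↑v) (by simpa using hva) (by simpa using hvb)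
        (by simpa using hvc) with h | h | h
      · exact Or.inl (Subtype.ext h)
      · exact Or.inr (Or.inl (Subtype.ext h))
      · exact Or.inr (Or.inr (Subtype.ext h))
    haveI : Fintype U := Fintype.ofFinite _
    obtain ⟨x0, y0, p, hp, hsupp⟩ := exists_hamiltonian_path hUconn hUac hUdeg
    set L := p.length with hLdef
    have hchain : Fintype.card U = L + 1 := by
      have h1 : p.support.toFinset = Finset.univ :=
        Finset.eq_univ_of_forall (fun w => List.mem_toFinset.mpr (hsupp w))
      have h2 : p.support.toFinset.card = L + 1 := by
        rw [List.toFinset_card_of_nodup hp.support_nodup, p.length_support]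
      rw [← h2, h1, Finset.card_univ]
    have hLn : L + 1 ≤ n := by
      have hc1 := Fintype.card_le_of_injective (fun x : U => (x : Fin n)) Subtype.val_injective
      rw [hchain, Fintype.card_fin] at hc1
      exact hc1
    have hidx_ex : ∀ x : U, ∃ i, p.getVert i = x ∧ i ≤ L :=
      fun x => Walk.mem_support_iff_exists_getVert.mp (hsupp x)
    choose idx hidx1 hidx2 using hidx_ex
    have hidx3 : ∀ i, i ≤ L → idx (p.getVert i) = i := by
      intro i hi
      exact getVert_inj_of_isPath hp (hidx2 _) hi (hidx1 _)
    have hconsec : ∀ x y : U, (SimpleGraph.induce U F).Adj x y →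
        idx y = idx x + 1 ∨ idx x = idx y + 1 := by
      intro x y hxy
      have hx := hsupp x
      have huniq := SimpleGraph.isAcyclic_iff_path_unique.mp hUac
      have hedge : s(x, y) ∈ p.edges := by
        have hy := hsupp y
        rw [← Walk.take_spec p hx, Walk.mem_support_append_iff] at hy
        rcases hy with hy | hy
        · have hq : ((p.takeUntil x hx).dropUntil y hy).IsPath :=
            (hp.takeUntil hx).dropUntil hy
          have he : (Walk.cons hxy.symm Walk.nil :
              (SimpleGraph.induce U F).Walk y x).IsPath := by
            simp [Walk.cons_isPath_iff, hxy.ne']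
          have hpq := huniq ⟨_, hq⟩ ⟨_, he⟩
          have heq : (p.takeUntil x hx).dropUntil y hy = Walk.cons hxy.symm Walk.nil :=
            congrArg Subtype.val hpq
          have hmem : s(y, x) ∈ ((p.takeUntil x hx).dropUntil y hy).edges := by
            rw [heq]
            simp
          have hmem2 : s(y, x) ∈ p.edges := by
            have h1 := Walk.edges_dropUntil_subset (p.takeUntil x hx) hy hmem
            have h2 := Walk.edges_takeUntil_subset p hx h1
            rw [← Walk.take_spec p hx, Walk.edges_append]
            exact List.mem_append_left _ h1
          rwa [Sym2.eq_swap] at hmem2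
        · have hq : ((p.dropUntil x hx).takeUntil y hy).IsPath :=
            (hp.dropUntil hx).takeUntil hy
          have he : (Walk.cons hxy Walk.nil :
              (SimpleGraph.induce U F).Walk x y).IsPath := by
            simp [Walk.cons_isPath_iff, hxy.ne]
          have hpq := huniq ⟨_, hq⟩ ⟨_, he⟩
          have heq : (p.dropUntil x hx).takeUntil y hy = Walk.cons hxy Walk.nil :=
            congrArg Subtype.val hpq
          have hmem : s(x, y) ∈ ((p.dropUntil x hx).takeUntil y hy).edges := by
            rw [heq]
            simp
          have h1 := Walk.edges_takeUntil_subset (p.dropUntil x hx) hy hmem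
          rw [← Walk.take_spec p hx, Walk.edges_append]
          exact List.mem_append_right _ h1
      have hadj2 : p.toSubgraph.Adj x y :=
        SimpleGraph.Subgraph.mem_edgeSet.mp ((Walk.mem_edges_toSubgraph p).mpr hedge)
      obtain ⟨i, hi_eq, hiL⟩ := (Walk.toSubgraph_adj_iff p).mp hadj2
      rw [Sym2.eq_iff] at hi_eq
      rcases hi_eq with ⟨h1, h2⟩ | ⟨h1, h2⟩
      · left
        have e1 := hidx3 i (by omega)
        have e2 := hidx3 (i + 1) (by omega)
        rw [h1] at e1
        rw [h2] at e2
        omega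
      · right
        have e1 := hidx3 i (by omega)
        have e2 := hidx3 (i + 1) (by omega)
        rw [h1] at e1
        rw [h2] at e2
        omega
    -- index sets of connected cards
    set IS : {s : Finset (Fin n) // s.card = ℓ + 1} → Finset ℕ :=
      fun s => (Finset.range (L + 1)).filter (fun i => ↑(p.getVert i) ∈ s.1) with hIS
    have hIScard : ∀ s ∈ CF, (IS s).card = ℓ + 1 := by
      intro s hs
      rw [← s.2]
      apply Finset.card_bij (fun i _ => (↑(p.getVert i) : Fin n))
      · intro i hi
        rw [hIS] at hi
        exact (Finset.mem_filter.mp hi).2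
      · intro i hi j hj hij
        rw [hIS, Finset.mem_filter, Finset.mem_range] at hi hj
        exact getVert_inj_of_isPath hp (by omega) (by omega) (Subtype.ext hij)
      · intro x hx
        have hxU : x ∈ U := hsubU s hs (Finset.mem_coe.mpr hx)
        refine ⟨idx ⟨x, hxU⟩, ?_, ?_⟩
        · rw [hIS, Finset.mem_filter, Finset.mem_range]
          constructor
          · have := hidx2 ⟨x, hxU⟩
            omega
          · rw [hidx1 ⟨x, hxU⟩]
            exact hx
        · rw [hidx1 ⟨x, hxU⟩]
    have hIVT : ∀ s (hs : s ∈ CF) (t : ℕ) (a b : (↑s.1 : Set (Fin n)))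
        (w : (SimpleGraph.induce (↑s.1 : Set (Fin n)) F).Walk a b),
        idx ⟨a.1, hsubU s hs a.2⟩ ≤ t → t ≤ idx ⟨b.1, hsubU s hs b.2⟩ →
        ∃ z : (↑s.1 : Set (Fin n)), idx ⟨z.1, hsubU s hs z.2⟩ = t := by
      intro s hs t a b w
      induction w with
      | nil =>
        intro h1 h2
        exact ⟨_, le_antisymm h1 h2⟩
      | @cons a' b' c' hadj q ih =>
        intro h1 h2
        rcases eq_or_lt_of_le h1 with he | hlt
        · exact ⟨_, he⟩
        · apply ih ?_ h2
          have hstep := hconsec ⟨a'.1, hsubU s hs a'.2⟩ ⟨b'.1, hsubU s hs b'.2⟩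
            (by simpa using hadj)
          omega
    have hinterval : ∀ s (hs : s ∈ CF), ∀ i ∈ IS s, ∀ j ∈ IS s, ∀ t, i ≤ t → t ≤ j →
        t ∈ IS s := by
      intro s hs i hi j hj t hit htj
      rw [hIS, Finset.mem_filter, Finset.mem_range] at hi hj
      have hiU : ↑(p.getVert i) ∈ U := hsubU s hs (Finset.mem_coe.mpr hi.2)
      have hjU : ↑(p.getVert j) ∈ U := hsubU s hs (Finset.mem_coe.mpr hj.2)
      obtain ⟨w⟩ := (hmemconn s hs).preconnected ⟨↑(p.getVert i), Finset.mem_coe.mpr hi.2⟩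
        ⟨↑(p.getVert j), Finset.mem_coe.mpr hj.2⟩
      have heqi : (⟨(↑(p.getVert i) : Fin n), hiU⟩ : U) = p.getVert i := Subtype.ext rfl
      have heqj : (⟨(↑(p.getVert j) : Fin n), hjU⟩ : U) = p.getVert j := Subtype.ext rfl
      obtain ⟨z, hz⟩ := hIVT s hs t _ _ w
        (by rw [heqi, hidx3 i (by omega)]; exact hit)
        (by rw [heqj, hidx3 j (by omega)]; exact htj)
      have hzL : t ≤ L := by
        rw [← hz]
        exact hidx2 _
      have hzv : p.getVert t = ⟨z.1, hsubU s hs z.2⟩ := by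
        rw [← hz]
        exact hidx1 _
      rw [hIS, Finset.mem_filter, Finset.mem_range]
      refine ⟨by omega, ?_⟩
      rw [hzv]
      exact Finset.mem_coe.mp z.2
    have hISrec : ∀ s ∈ CF, s.1 = (IS s).image (fun i => (↑(p.getVert i) : Fin n)) := by
      intro s hs
      symm
      apply Finset.eq_of_subset_of_card_le
      · intro x hx
        obtain ⟨i, hi, hix⟩ := Finset.mem_image.mp hx
        rw [hIS, Finset.mem_filter] at hi
        exact hix ▸ hi.2
      · rw [Finset.card_image_of_injOn, hIScard s hs, s.2]
        intro i hi j hj hij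
        rw [hIS, Finset.mem_coe, Finset.mem_filter, Finset.mem_range] at hi hj
        exact getVert_inj_of_isPath hp (by omega) (by omega) (Subtype.ext hij)
    have hISne : ∀ s (hs : s ∈ CF), (IS s).Nonempty := fun s hs =>
      Finset.card_pos.mp (by rw [hIScard s hs]; omega)
    have hISicc : ∀ s (hs : s ∈ CF),
        IS s = Finset.Icc ((IS s).min' (hISne s hs)) ((IS s).min' (hISne s hs) + ℓ) := by
      intro s hs
      have hne : (IS s).Nonempty := hISne s hs
      set i0 := (IS s).min' hne with hi0
      set M := (IS s).max' hne with hM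
      have hsub1 : IS s ⊆ Finset.Icc i0 M := by
        intro i hi
        rw [Finset.mem_Icc]
        exact ⟨Finset.min'_le _ _ hi, Finset.le_max' _ _ hi⟩
      have hsub2 : Finset.Icc i0 M ⊆ IS s := by
        intro t ht
        rw [Finset.mem_Icc] at ht
        exact hinterval s hs i0 (Finset.min'_mem _ _) M (Finset.max'_mem _ _) t ht.1 ht.2
      have heq : IS s = Finset.Icc i0 M := le_antisymm hsub1 hsub2
      have hcard : M = i0 + ℓ := by
        have h1 := hIScard s hs
        rw [heq, Nat.card_Icc] at h1
        have h2 : i0 ≤ M := Finset.min'_le _ _ (Finset.max'_mem _ _)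
        omega
      rw [heq, hcard]
    have hmin_inj : ∀ s (hs : s ∈ CF), ∀ t (ht : t ∈ CF),
        (IS s).min' (hISne s hs) = (IS t).min' (hISne t ht) → s = t := by
      intro s hs t ht hmin
      have h1 := hISicc s hs
      have h2 := hISicc t ht
      have hIS_eq : IS s = IS t := by
        rw [hmin] at h1
        exact h1.trans h2.symm
      apply Subtype.ext
      rw [hISrec s hs, hISrec t ht, hIS_eq]
    have hmin_le : ∀ s (hs : s ∈ CF), (IS s).min' (hISne s hs) < L + 1 - ℓ := by
      intro s hs
      have h1 := hISicc s hs
      set a := (IS s).min' (hISne s hs) with ha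
      have hmem : a + ℓ ∈ IS s := by
        rw [h1]
        rw [Finset.mem_Icc]
        omega
      rw [hIS, Finset.mem_filter, Finset.mem_range] at hmem
      omega
    have hfinalF : CF.card ≤ L + 1 - ℓ := by
      have h1 : CF.card ≤ (Finset.range (L + 1 - ℓ)).card := by
        apply Finset.card_le_card_of_injOn
          (fun s => if hs : s ∈ CF then (IS s).min' (hISne s hs) else 0)
        · intro s hs
          rw [Finset.mem_coe] at hs
          rw [Finset.mem_coe, Finset.mem_range]
          simp only [dif_pos hs]
          exact hmin_le s hs
        · intro s hs t ht heq
          rw [Finset.mem_coe] at hs ht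
          simp only [dif_pos hs, dif_pos ht] at heq
          exact hmin_inj s hs t ht heq
      rwa [Finset.card_range] at h1
    omega
  refine ⟨hF3, ?_⟩
  -- transfer to H
  obtain ⟨v, hv⟩ := hF3
  obtain ⟨a, b, c', ha, hb, hc', hab, hac, hbc⟩ := exists_three_nbrs hv
  have hscard : ({v, a, b, c'} : Finset (Fin n)).card ≤ ℓ + 1 := by
    have : ({v, a, b, c'} : Finset (Fin n)).card ≤ 4 := by
      apply le_trans (Finset.card_insert_le _ _)
      apply Nat.succ_le_succ
      apply le_trans (Finset.card_insert_le _ _)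
      apply Nat.succ_le_succ
      apply le_trans (Finset.card_insert_le _ _)
      simp
    omega
  obtain ⟨s, hs_sub, hs_card⟩ := Finset.exists_superset_card_eq hscard (by simp; omega)
  have hvmem : v ∈ (↑s : Set (Fin n)) := hs_sub (by simp)
  have hamem : a ∈ (↑s : Set (Fin n)) := hs_sub (by simp)
  have hbmem : b ∈ (↑s : Set (Fin n)) := hs_sub (by simp)
  have hcmem : c' ∈ (↑s : Set (Fin n)) := hs_sub (by simp)
  obtain ⟨e⟩ := hφ ⟨s, hs_card⟩
  have hadj : ∀ (x : Fin n) (hx : x ∈ (↑s : Set (Fin n))), F.Adj v x →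
      H.Adj ↑(e ⟨v, hvmem⟩) ↑(e ⟨x, hx⟩) := by
    intro x hx hvx
    have : (SimpleGraph.induce (↑s : Set (Fin n)) F).Adj ⟨v, hvmem⟩ ⟨x, hx⟩ := by
      simpa using hvx
    have := e.map_adj_iff.mpr this
    simpa using this
  have hne : ∀ (x y : Fin n) (hx : x ∈ (↑s : Set (Fin n))) (hy : y ∈ (↑s : Set (Fin n))),
      x ≠ y → (↑(e ⟨x, hx⟩) : Fin n) ≠ ↑(e ⟨y, hy⟩) := by
    intro x y hx hy hxy h
    exact hxy (congrArg Subtype.val (e.toEquiv.injective (Subtype.ext h)))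
  exact ⟨↑(e ⟨v, hvmem⟩), three_le_ndeg (hadj a hamem ha) (hadj b hbmem hb) (hadj c' hcmem hc')
    (hne a b hamem hbmem hab) (hne a c' hamem hcmem hac) (hne b c' hbmem hcmem hbc)⟩
end
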